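/- arXiv:1902.02920 — 4 statements merged into one kernel-verified Lean document; each statement's English description precedes it below -/
import Mathlib

section
/- For every x, μ ∈ ℝ^d, every positive definite d×d matrix Σ, and all indices t1, …, t6 ∈ {1,…,d}, writing s_{ij} := (Σ^{-1})_{ij} and z_i := (Σ^{-1}(x−μ))_i, the sixth-order mean derivatives of the d-variate normal density satisfy ∂⁶f(x;μ,Σ)/∂μ_{t1}∂μ_{t2}∂μ_{t3}∂μ_{t4}∂μ_{t5}∂μ_{t6} = ( −Σ_{{a,b},{c,e},{g,h}} s_{t_a t_b} s_{t_c t_e} s_{t_g t_h} + Σ_{{a,b},{c,e},{g},{h}} s_{t_a t_b} s_{t_c t_e} z_{t_g} z_{t_h} − Σ_{{a,b},{c,e,g,h}} s_{t_a t_b} z_{t_c} z_{t_e} z_{t_g} z_{t_h} + z_{t1} z_{t2} z_{t3} z_{t4} z_{t5} z_{t6} ) · f(x;μ,Σ), where the first sum ranges over the 15 partitions of {1,…,6} into three unordered pairs, the second sum over the 45 partitions of {1,…,6} into two unordered pairs and two singletons, and the third sum over the 15 partitions of {1,…,6} into one unordered pair {a,b} and one four-element set {c,e,g,h}. -/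
open Real Matrix

noncomputable section

/-- Partial derivative of `F : (ι → ℝ) → ℝ` in the coordinate `i`. -/
def pd {ι : Type*} [Fintype ι] [DecidableEq ι] (i : ι) (F : (ι → ℝ) → ℝ) :
    (ι → ℝ) → ℝ :=
  fun a => fderiv ℝ F a (Pi.single i 1)

/-- The `d`-variate normal density with mean `μ` and covariance matrix `S`. -/
def normpdf (d : ℕ) (x μ : Fin d → ℝ) (S : Matrix (Fin d) (Fin d) ℝ) : ℝ :=
  (2 * π) ^ (-(d : ℝ) / 2) * S.det ^ (-(1 : ℝ) / 2) *
    Real.exp (-((x - μ) ⬝ᵥ (S⁻¹ *ᵥ (x - μ))) / 2)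

section aux
variable {d : ℕ} (x : Fin d → ℝ) (Sg : Matrix (Fin d) (Fin d) ℝ)

def zf (μ' : Fin d → ℝ) (i : Fin d) : ℝ := (Sg⁻¹ *ᵥ (x - μ')) i

lemma zf_eq (μ' : Fin d → ℝ) (i : Fin d) :
    zf x Sg μ' i = ∑ j, Sg⁻¹ i j * (x j - μ' j) := by
  simp [zf, Matrix.mulVec, dotProduct]

lemma diff_zf (i : Fin d) : Differentiable ℝ (fun μ' => zf x Sg μ' i) := by
  simp only [zf_eq]
  fun_prop

lemma inv_symm (hSg : Sg.PosDef) (i j : Fin d) : Sg⁻¹ i j = Sg⁻¹ j i := by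
  have h : Sg⁻¹.IsHermitian := (hSg.1).inv
  calc Sg⁻¹ i j = Sg⁻¹ᴴ i j := by rw [h]
    _ = Sg⁻¹ j i := by simp [Matrix.conjTranspose_apply]

lemma fderiv_eval (j : Fin d) (μ0 : Fin d → ℝ) (v : Fin d → ℝ) :
    fderiv ℝ (fun μ' : Fin d → ℝ => μ' j) μ0 v = v j := by
  rw [(hasFDerivAt_apply j μ0).fderiv]; rfl

lemma pd_zf (hSg : Sg.PosDef) (t i : Fin d) :
    pd t (fun μ' => zf x Sg μ' i) = fun _ => -(Sg⁻¹ t i) := by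
  funext μ0
  simp only [pd, zf_eq]
  rw [fderiv_fun_sum (fun j _ => by fun_prop)]
  simp only [ContinuousLinearMap.coe_sum', Finset.sum_apply]
  have h2 : ∀ j : Fin d, fderiv ℝ (fun μ' : Fin d → ℝ => Sg⁻¹ i j * (x j - μ' j)) μ0 (Pi.single t 1)
      = -(Sg⁻¹ i j) * ((Pi.single t (1:ℝ) : Fin d → ℝ) j) := by
    intro j
    rw [fderiv_const_mul (by fun_prop)]
    have : fderiv ℝ (fun μ' : Fin d → ℝ => x j - μ' j) μ0 (Pi.single t 1)
        = -((Pi.single t (1:ℝ) : Fin d → ℝ) j) := by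
      rw [fderiv_const_sub]
      simp [fderiv_eval]
    simp only [ContinuousLinearMap.smul_apply, this, smul_eq_mul]
    ring
  rw [Finset.sum_congr rfl (fun j _ => h2 j)]
  simp only [Pi.single_apply, mul_ite, mul_one, mul_zero, neg_mul]
  rw [Finset.sum_ite_eq' Finset.univ t (fun j => -(Sg⁻¹ i j))]
  simp [inv_symm Sg hSg i t]


def Qf (μ' : Fin d → ℝ) : ℝ := ∑ i, ∑ j, (x i - μ' i) * (Sg⁻¹ i j * (x j - μ' j))

lemma normpdf_eq (μ' : Fin d → ℝ) :
    normpdf d x μ' Sg =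
      ((2 * π) ^ (-(d : ℝ) / 2) * Sg.det ^ (-(1 : ℝ) / 2)) *
        Real.exp (-(Qf x Sg μ') / 2) := by
  simp [normpdf, Qf, dotProduct, Matrix.mulVec, Finset.mul_sum]

lemma diff_Qf : Differentiable ℝ (Qf x Sg) := by
  unfold Qf; fun_prop

lemma diff_N : Differentiable ℝ (fun μ' => normpdf d x μ' Sg) := by
  have : (fun μ' => normpdf d x μ' Sg) =
      fun μ' => ((2 * π) ^ (-(d : ℝ) / 2) * Sg.det ^ (-(1 : ℝ) / 2)) *
        Real.exp (-(Qf x Sg μ') / 2) := funext fun μ' => normpdf_eq x Sg μ'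
  rw [this]
  have := diff_Qf x Sg
  fun_prop

lemma pd_affine (t j : Fin d) (μ0 : Fin d → ℝ) :
    fderiv ℝ (fun μ' : Fin d → ℝ => x j - μ' j) μ0 (Pi.single t 1)
      = -((Pi.single t (1:ℝ) : Fin d → ℝ) j) := by
  rw [fderiv_const_sub]
  simp [fderiv_eval]

lemma pd_Qf (hSg : Sg.PosDef) (t : Fin d) (μ0 : Fin d → ℝ) :
    pd t (Qf x Sg) μ0 = -2 * zf x Sg μ0 t := by
  simp only [pd]
  rw [show Qf x Sg = fun μ' => ∑ i, ∑ j, (x i - μ' i) * (Sg⁻¹ i j * (x j - μ' j)) from rfl]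
  rw [fderiv_fun_sum (fun i _ => by fun_prop)]
  simp only [ContinuousLinearMap.coe_sum', Finset.sum_apply]
  have h1 : ∀ i : Fin d,
      fderiv ℝ (fun μ' : Fin d → ℝ => ∑ j, (x i - μ' i) * (Sg⁻¹ i j * (x j - μ' j))) μ0
        (Pi.single t 1)
      = ∑ j, (-((Pi.single t (1:ℝ) : Fin d → ℝ) i) * (Sg⁻¹ i j * (x j - μ0 j))
          + (x i - μ0 i) * (Sg⁻¹ i j * -((Pi.single t (1:ℝ) : Fin d → ℝ) j))) := by
    intro i
    rw [fderiv_fun_sum (fun j _ => by fun_prop)]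
    simp only [ContinuousLinearMap.coe_sum', Finset.sum_apply]
    refine Finset.sum_congr rfl fun j _ => ?_
    rw [fderiv_fun_mul (by fun_prop) (by fun_prop)]
    simp only [ContinuousLinearMap.add_apply, ContinuousLinearMap.smul_apply,
      smul_eq_mul, pd_affine]
    rw [fderiv_const_mul (by fun_prop)]
    simp only [ContinuousLinearMap.smul_apply, smul_eq_mul, pd_affine]
    ring
  rw [Finset.sum_congr rfl (fun i _ => h1 i)]
  have hsym := inv_symm Sg hSg
  simp only [Finset.sum_add_distrib, Pi.single_apply]
  rw [zf_eq]
  simp only [ite_mul, one_mul, zero_mul, neg_mul, mul_ite, mul_one, mul_zero, mul_neg]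
  rw [Finset.sum_comm (f := fun i j => -(if j = t then (x i - μ0 i) * Sg⁻¹ i j else 0))]
  have e1 : ∀ y : Fin d, (∑ x_1 : Fin d, -if y = t then (x x_1 - μ0 x_1) * Sg⁻¹ x_1 y else 0)
      = -if y = t then ∑ x_1 : Fin d, Sg⁻¹ t x_1 * (x x_1 - μ0 x_1) else 0 := by
    intro y
    by_cases hy : y = t
    · subst hy
      simp [← Finset.sum_neg_distrib]
      refine Finset.sum_congr rfl fun i _ => ?_
      rw [hsym i y]; ring
    · simp [hy]
  have e2 : ∀ x_1 : Fin d, (∑ x_2 : Fin d, -if x_1 = t then Sg⁻¹ x_1 x_2 * (x x_2 - μ0 x_2) else 0)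
      = -if x_1 = t then ∑ x_2 : Fin d, Sg⁻¹ t x_2 * (x x_2 - μ0 x_2) else 0 := by
    intro x1
    by_cases hy : x1 = t
    · subst hy; simp [← Finset.sum_neg_distrib]
    · simp [hy]
  rw [Finset.sum_congr rfl fun y _ => e1 y, Finset.sum_congr rfl fun y _ => e2 y]
  have hneg : ∀ (c : Prop) [Decidable c] (a : ℝ), (-if c then a else 0) = if c then -a else 0 := by
    intro c _ a; split <;> simp
  simp only [hneg, Finset.sum_ite_eq', Finset.mem_univ, if_true]
  ring

lemma pd_N (hSg : Sg.PosDef) (t : Fin d) :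
    pd t (fun μ' => normpdf d x μ' Sg) = fun μ0 => zf x Sg μ0 t * normpdf d x μ0 Sg := by
  funext μ0
  have hfun : (fun μ' => normpdf d x μ' Sg) =
      fun μ' => ((2 * π) ^ (-(d : ℝ) / 2) * Sg.det ^ (-(1 : ℝ) / 2)) *
        Real.exp (-(Qf x Sg μ') / 2) := funext fun μ' => normpdf_eq x Sg μ'
  have hQd : Differentiable ℝ (Qf x Sg) := diff_Qf x Sg
  rw [hfun]
  simp only [pd]
  rw [fderiv_const_mul (by fun_prop)]
  rw [fderiv_exp (by fun_prop)]
  have hg : fderiv ℝ (fun μ' => -(Qf x Sg μ') / 2) μ0 (Pi.single t 1)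
      = zf x Sg μ0 t := by
    have : (fun μ' => -(Qf x Sg μ') / 2) = fun μ' => (-(1:ℝ)/2) * Qf x Sg μ' := by
      funext μ'; ring
    rw [this, fderiv_const_mul (hQd μ0)]
    have := pd_Qf x Sg hSg t μ0
    simp only [pd] at this
    simp only [ContinuousLinearMap.smul_apply, smul_eq_mul, this]
    ring
  simp only [ContinuousLinearMap.smul_apply, smul_eq_mul, hg, normpdf_eq x Sg μ0]
  ring

def Gg (L : List (Fin d)) (μ' : Fin d → ℝ) : ℝ :=
  (L.map (zf x Sg μ')).prod * normpdf d x μ' Sg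

lemma Gg_nil : Gg x Sg [] = fun μ' => normpdf d x μ' Sg := by
  funext μ'; simp [Gg]

lemma Gg_cons (i : Fin d) (L : List (Fin d)) :
    Gg x Sg (i :: L) = fun μ' => zf x Sg μ' i * Gg x Sg L μ' := by
  funext μ'; simp [Gg]; ring

lemma diff_Gg (L : List (Fin d)) : Differentiable ℝ (Gg x Sg L) := by
  induction L with
  | nil => rw [Gg_nil]; exact diff_N x Sg
  | cons a L ih =>
    rw [Gg_cons]
    exact ((diff_zf x Sg a).mul ih)

lemma pd_fun_mul (t : Fin d) (f g : (Fin d → ℝ) → ℝ)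
    (hf : Differentiable ℝ f) (hg : Differentiable ℝ g) :
    pd t (fun a => f a * g a) = fun a => pd t f a * g a + f a * pd t g a := by
  funext μ0
  simp only [pd]
  rw [fderiv_fun_mul (hf μ0) (hg μ0)]
  simp [smul_eq_mul]
  ring

lemma pd_fun_add (t : Fin d) (f g : (Fin d → ℝ) → ℝ)
    (hf : Differentiable ℝ f) (hg : Differentiable ℝ g) :
    pd t (fun a => f a + g a) = fun a => pd t f a + pd t g a := by
  funext μ0
  simp only [pd]
  rw [fderiv_fun_add (hf μ0) (hg μ0)]
  simp

lemma pd_fun_const_mul (t : Fin d) (c : ℝ) (f : (Fin d → ℝ) → ℝ)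
    (hf : Differentiable ℝ f) :
    pd t (fun a => c * f a) = fun a => c * pd t f a := by
  funext μ0
  simp only [pd]
  rw [fderiv_const_mul (hf μ0)]
  simp

lemma pd_Gg (hSg : Sg.PosDef) (t : Fin d) (L : List (Fin d)) :
    pd t (Gg x Sg L) = fun μ0 =>
      Gg x Sg (t :: L) μ0
        - ∑ q : Fin L.length, Sg⁻¹ t (L.get q) * Gg x Sg (L.eraseIdx q) μ0 := by
  induction L with
  | nil =>
    rw [Gg_nil, pd_N x Sg hSg t]
    funext μ0
    simp [Gg_cons, Gg_nil]
  | cons a L ih =>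
    rw [Gg_cons]
    rw [pd_fun_mul t _ _ (diff_zf x Sg a) (diff_Gg x Sg L)]
    funext μ0
    rw [pd_zf x Sg hSg t a, ih]
    simp only [Fin.sum_univ_succ, List.length_cons, List.get_eq_getElem,
      Fin.val_zero, List.getElem_cons_zero, List.eraseIdx_cons_zero,
      Fin.val_succ, List.getElem_cons_succ, List.eraseIdx_cons_succ]
    rw [Gg_cons x Sg t (a :: L), Gg_cons x Sg a L, Gg_cons x Sg t L]
    simp only [Finset.mul_sum]
    have : ∀ q : Fin L.length,
        Gg x Sg (a :: L.eraseIdx q) μ0 = zf x Sg μ0 a * Gg x Sg (L.eraseIdx q) μ0 := by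
      intro q; rw [Gg_cons]
    simp only [this]
    rw [mul_sub, Finset.mul_sum]
    have hs : ∑ q : Fin L.length, zf x Sg μ0 a * (Sg⁻¹ t (L.get q) * Gg x Sg (L.eraseIdx q) μ0)
        = ∑ q : Fin L.length, Sg⁻¹ t (L.get q) * (zf x Sg μ0 a * Gg x Sg (L.eraseIdx q) μ0) :=
      Finset.sum_congr rfl fun q _ => by ring
    simp only [List.get_eq_getElem] at hs
    rw [hs]
    ring

lemma pd_fun_const (t : Fin d) (c : ℝ) :
    pd t (fun _ : Fin d → ℝ => c) = fun _ => 0 := by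
  funext μ0; simp [pd]

lemma diff_sum_Gg (terms : List (ℝ × List (Fin d))) :
    Differentiable ℝ (fun μ0 => (terms.map (fun p => p.1 * Gg x Sg p.2 μ0)).sum) := by
  induction terms with
  | nil => simp only [List.map_nil, List.sum_nil]; fun_prop
  | cons p ts ih =>
    simp only [List.map_cons, List.sum_cons]
    exact (((diff_Gg x Sg p.2).const_mul p.1).add ih)

lemma pd_sum_Gg (hSg : Sg.PosDef) (t : Fin d) (terms : List (ℝ × List (Fin d))) :
    pd t (fun μ0 => (terms.map (fun p => p.1 * Gg x Sg p.2 μ0)).sum) =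
      fun μ0 => (terms.map (fun p => p.1 *
        (Gg x Sg (t :: p.2) μ0
          - ∑ q : Fin p.2.length, Sg⁻¹ t (p.2.get q) * Gg x Sg (p.2.eraseIdx q) μ0))).sum := by
  induction terms with
  | nil => simp only [List.map_nil, List.sum_nil]; exact pd_fun_const t 0
  | cons p ts ih =>
    simp only [List.map_cons, List.sum_cons]
    rw [pd_fun_add t _ _ ((diff_Gg x Sg p.2).const_mul p.1) (diff_sum_Gg x Sg ts)]
    funext μ0
    rw [pd_fun_const_mul t p.1 _ (diff_Gg x Sg p.2), pd_Gg x Sg hSg t p.2]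
    rw [ih]

end aux

/-- explicit formula for the sixth-order mean derivatives of the
`d`-variate normal density, with `s i j := (Σ⁻¹) i j` and `z i := (Σ⁻¹ (x − μ)) i`.
The three sums over partitions of `{1,…,6}` (into three pairs; into two pairs and
two singletons; into one pair and one four-element set) are written out term by term. -/
theorem normpdf_deriv_mu6
    (d : ℕ) (hd : 1 ≤ d) (x μ : Fin d → ℝ) (Sg : Matrix (Fin d) (Fin d) ℝ)
    (hSg : Sg.PosDef) (t1 t2 t3 t4 t5 t6 : Fin d) :
    pd t1 (pd t2 (pd t3 (pd t4 (pd t5 (pd t6 (fun μ' => normpdf d x μ' Sg)))))) μ =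
      (-(Sg⁻¹ t1 t2 * Sg⁻¹ t3 t4 * Sg⁻¹ t5 t6
          + Sg⁻¹ t1 t2 * Sg⁻¹ t3 t5 * Sg⁻¹ t4 t6
          + Sg⁻¹ t1 t2 * Sg⁻¹ t3 t6 * Sg⁻¹ t4 t5
          + Sg⁻¹ t1 t3 * Sg⁻¹ t2 t4 * Sg⁻¹ t5 t6
          + Sg⁻¹ t1 t3 * Sg⁻¹ t2 t5 * Sg⁻¹ t4 t6
          + Sg⁻¹ t1 t3 * Sg⁻¹ t2 t6 * Sg⁻¹ t4 t5
          + Sg⁻¹ t1 t4 * Sg⁻¹ t2 t3 * Sg⁻¹ t5 t6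
          + Sg⁻¹ t1 t4 * Sg⁻¹ t2 t5 * Sg⁻¹ t3 t6
          + Sg⁻¹ t1 t4 * Sg⁻¹ t2 t6 * Sg⁻¹ t3 t5
          + Sg⁻¹ t1 t5 * Sg⁻¹ t2 t3 * Sg⁻¹ t4 t6
          + Sg⁻¹ t1 t5 * Sg⁻¹ t2 t4 * Sg⁻¹ t3 t6
          + Sg⁻¹ t1 t5 * Sg⁻¹ t2 t6 * Sg⁻¹ t3 t4
          + Sg⁻¹ t1 t6 * Sg⁻¹ t2 t3 * Sg⁻¹ t4 t5
          + Sg⁻¹ t1 t6 * Sg⁻¹ t2 t4 * Sg⁻¹ t3 t5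
          + Sg⁻¹ t1 t6 * Sg⁻¹ t2 t5 * Sg⁻¹ t3 t4)
        + (Sg⁻¹ t3 t4 * Sg⁻¹ t5 t6 * (Sg⁻¹ *ᵥ (x - μ)) t1 * (Sg⁻¹ *ᵥ (x - μ)) t2
          + Sg⁻¹ t3 t5 * Sg⁻¹ t4 t6 * (Sg⁻¹ *ᵥ (x - μ)) t1 * (Sg⁻¹ *ᵥ (x - μ)) t2
          + Sg⁻¹ t3 t6 * Sg⁻¹ t4 t5 * (Sg⁻¹ *ᵥ (x - μ)) t1 * (Sg⁻¹ *ᵥ (x - μ)) t2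
          + Sg⁻¹ t2 t4 * Sg⁻¹ t5 t6 * (Sg⁻¹ *ᵥ (x - μ)) t1 * (Sg⁻¹ *ᵥ (x - μ)) t3
          + Sg⁻¹ t2 t5 * Sg⁻¹ t4 t6 * (Sg⁻¹ *ᵥ (x - μ)) t1 * (Sg⁻¹ *ᵥ (x - μ)) t3
          + Sg⁻¹ t2 t6 * Sg⁻¹ t4 t5 * (Sg⁻¹ *ᵥ (x - μ)) t1 * (Sg⁻¹ *ᵥ (x - μ)) t3
          + Sg⁻¹ t2 t3 * Sg⁻¹ t5 t6 * (Sg⁻¹ *ᵥ (x - μ)) t1 * (Sg⁻¹ *ᵥ (x - μ)) t4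
          + Sg⁻¹ t2 t5 * Sg⁻¹ t3 t6 * (Sg⁻¹ *ᵥ (x - μ)) t1 * (Sg⁻¹ *ᵥ (x - μ)) t4
          + Sg⁻¹ t2 t6 * Sg⁻¹ t3 t5 * (Sg⁻¹ *ᵥ (x - μ)) t1 * (Sg⁻¹ *ᵥ (x - μ)) t4
          + Sg⁻¹ t2 t3 * Sg⁻¹ t4 t6 * (Sg⁻¹ *ᵥ (x - μ)) t1 * (Sg⁻¹ *ᵥ (x - μ)) t5
          + Sg⁻¹ t2 t4 * Sg⁻¹ t3 t6 * (Sg⁻¹ *ᵥ (x - μ)) t1 * (Sg⁻¹ *ᵥ (x - μ)) t5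
          + Sg⁻¹ t2 t6 * Sg⁻¹ t3 t4 * (Sg⁻¹ *ᵥ (x - μ)) t1 * (Sg⁻¹ *ᵥ (x - μ)) t5
          + Sg⁻¹ t2 t3 * Sg⁻¹ t4 t5 * (Sg⁻¹ *ᵥ (x - μ)) t1 * (Sg⁻¹ *ᵥ (x - μ)) t6
          + Sg⁻¹ t2 t4 * Sg⁻¹ t3 t5 * (Sg⁻¹ *ᵥ (x - μ)) t1 * (Sg⁻¹ *ᵥ (x - μ)) t6
          + Sg⁻¹ t2 t5 * Sg⁻¹ t3 t4 * (Sg⁻¹ *ᵥ (x - μ)) t1 * (Sg⁻¹ *ᵥ (x - μ)) t6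
          + Sg⁻¹ t1 t4 * Sg⁻¹ t5 t6 * (Sg⁻¹ *ᵥ (x - μ)) t2 * (Sg⁻¹ *ᵥ (x - μ)) t3
          + Sg⁻¹ t1 t5 * Sg⁻¹ t4 t6 * (Sg⁻¹ *ᵥ (x - μ)) t2 * (Sg⁻¹ *ᵥ (x - μ)) t3
          + Sg⁻¹ t1 t6 * Sg⁻¹ t4 t5 * (Sg⁻¹ *ᵥ (x - μ)) t2 * (Sg⁻¹ *ᵥ (x - μ)) t3
          + Sg⁻¹ t1 t3 * Sg⁻¹ t5 t6 * (Sg⁻¹ *ᵥ (x - μ)) t2 * (Sg⁻¹ *ᵥ (x - μ)) t4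
          + Sg⁻¹ t1 t5 * Sg⁻¹ t3 t6 * (Sg⁻¹ *ᵥ (x - μ)) t2 * (Sg⁻¹ *ᵥ (x - μ)) t4
          + Sg⁻¹ t1 t6 * Sg⁻¹ t3 t5 * (Sg⁻¹ *ᵥ (x - μ)) t2 * (Sg⁻¹ *ᵥ (x - μ)) t4
          + Sg⁻¹ t1 t3 * Sg⁻¹ t4 t6 * (Sg⁻¹ *ᵥ (x - μ)) t2 * (Sg⁻¹ *ᵥ (x - μ)) t5
          + Sg⁻¹ t1 t4 * Sg⁻¹ t3 t6 * (Sg⁻¹ *ᵥ (x - μ)) t2 * (Sg⁻¹ *ᵥ (x - μ)) t5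
          + Sg⁻¹ t1 t6 * Sg⁻¹ t3 t4 * (Sg⁻¹ *ᵥ (x - μ)) t2 * (Sg⁻¹ *ᵥ (x - μ)) t5
          + Sg⁻¹ t1 t3 * Sg⁻¹ t4 t5 * (Sg⁻¹ *ᵥ (x - μ)) t2 * (Sg⁻¹ *ᵥ (x - μ)) t6
          + Sg⁻¹ t1 t4 * Sg⁻¹ t3 t5 * (Sg⁻¹ *ᵥ (x - μ)) t2 * (Sg⁻¹ *ᵥ (x - μ)) t6
          + Sg⁻¹ t1 t5 * Sg⁻¹ t3 t4 * (Sg⁻¹ *ᵥ (x - μ)) t2 * (Sg⁻¹ *ᵥ (x - μ)) t6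
          + Sg⁻¹ t1 t2 * Sg⁻¹ t5 t6 * (Sg⁻¹ *ᵥ (x - μ)) t3 * (Sg⁻¹ *ᵥ (x - μ)) t4
          + Sg⁻¹ t1 t5 * Sg⁻¹ t2 t6 * (Sg⁻¹ *ᵥ (x - μ)) t3 * (Sg⁻¹ *ᵥ (x - μ)) t4
          + Sg⁻¹ t1 t6 * Sg⁻¹ t2 t5 * (Sg⁻¹ *ᵥ (x - μ)) t3 * (Sg⁻¹ *ᵥ (x - μ)) t4
          + Sg⁻¹ t1 t2 * Sg⁻¹ t4 t6 * (Sg⁻¹ *ᵥ (x - μ)) t3 * (Sg⁻¹ *ᵥ (x - μ)) t5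
          + Sg⁻¹ t1 t4 * Sg⁻¹ t2 t6 * (Sg⁻¹ *ᵥ (x - μ)) t3 * (Sg⁻¹ *ᵥ (x - μ)) t5
          + Sg⁻¹ t1 t6 * Sg⁻¹ t2 t4 * (Sg⁻¹ *ᵥ (x - μ)) t3 * (Sg⁻¹ *ᵥ (x - μ)) t5
          + Sg⁻¹ t1 t2 * Sg⁻¹ t4 t5 * (Sg⁻¹ *ᵥ (x - μ)) t3 * (Sg⁻¹ *ᵥ (x - μ)) t6
          + Sg⁻¹ t1 t4 * Sg⁻¹ t2 t5 * (Sg⁻¹ *ᵥ (x - μ)) t3 * (Sg⁻¹ *ᵥ (x - μ)) t6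
          + Sg⁻¹ t1 t5 * Sg⁻¹ t2 t4 * (Sg⁻¹ *ᵥ (x - μ)) t3 * (Sg⁻¹ *ᵥ (x - μ)) t6
          + Sg⁻¹ t1 t2 * Sg⁻¹ t3 t6 * (Sg⁻¹ *ᵥ (x - μ)) t4 * (Sg⁻¹ *ᵥ (x - μ)) t5
          + Sg⁻¹ t1 t3 * Sg⁻¹ t2 t6 * (Sg⁻¹ *ᵥ (x - μ)) t4 * (Sg⁻¹ *ᵥ (x - μ)) t5
          + Sg⁻¹ t1 t6 * Sg⁻¹ t2 t3 * (Sg⁻¹ *ᵥ (x - μ)) t4 * (Sg⁻¹ *ᵥ (x - μ)) t5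
          + Sg⁻¹ t1 t2 * Sg⁻¹ t3 t5 * (Sg⁻¹ *ᵥ (x - μ)) t4 * (Sg⁻¹ *ᵥ (x - μ)) t6
          + Sg⁻¹ t1 t3 * Sg⁻¹ t2 t5 * (Sg⁻¹ *ᵥ (x - μ)) t4 * (Sg⁻¹ *ᵥ (x - μ)) t6
          + Sg⁻¹ t1 t5 * Sg⁻¹ t2 t3 * (Sg⁻¹ *ᵥ (x - μ)) t4 * (Sg⁻¹ *ᵥ (x - μ)) t6
          + Sg⁻¹ t1 t2 * Sg⁻¹ t3 t4 * (Sg⁻¹ *ᵥ (x - μ)) t5 * (Sg⁻¹ *ᵥ (x - μ)) t6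
          + Sg⁻¹ t1 t3 * Sg⁻¹ t2 t4 * (Sg⁻¹ *ᵥ (x - μ)) t5 * (Sg⁻¹ *ᵥ (x - μ)) t6
          + Sg⁻¹ t1 t4 * Sg⁻¹ t2 t3 * (Sg⁻¹ *ᵥ (x - μ)) t5 * (Sg⁻¹ *ᵥ (x - μ)) t6)
        - (Sg⁻¹ t1 t2 * (Sg⁻¹ *ᵥ (x - μ)) t3 * (Sg⁻¹ *ᵥ (x - μ)) t4 * (Sg⁻¹ *ᵥ (x - μ)) t5 * (Sg⁻¹ *ᵥ (x - μ)) t6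
          + Sg⁻¹ t1 t3 * (Sg⁻¹ *ᵥ (x - μ)) t2 * (Sg⁻¹ *ᵥ (x - μ)) t4 * (Sg⁻¹ *ᵥ (x - μ)) t5 * (Sg⁻¹ *ᵥ (x - μ)) t6
          + Sg⁻¹ t1 t4 * (Sg⁻¹ *ᵥ (x - μ)) t2 * (Sg⁻¹ *ᵥ (x - μ)) t3 * (Sg⁻¹ *ᵥ (x - μ)) t5 * (Sg⁻¹ *ᵥ (x - μ)) t6
          + Sg⁻¹ t1 t5 * (Sg⁻¹ *ᵥ (x - μ)) t2 * (Sg⁻¹ *ᵥ (x - μ)) t3 * (Sg⁻¹ *ᵥ (x - μ)) t4 * (Sg⁻¹ *ᵥ (x - μ)) t6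
          + Sg⁻¹ t1 t6 * (Sg⁻¹ *ᵥ (x - μ)) t2 * (Sg⁻¹ *ᵥ (x - μ)) t3 * (Sg⁻¹ *ᵥ (x - μ)) t4 * (Sg⁻¹ *ᵥ (x - μ)) t5
          + Sg⁻¹ t2 t3 * (Sg⁻¹ *ᵥ (x - μ)) t1 * (Sg⁻¹ *ᵥ (x - μ)) t4 * (Sg⁻¹ *ᵥ (x - μ)) t5 * (Sg⁻¹ *ᵥ (x - μ)) t6
          + Sg⁻¹ t2 t4 * (Sg⁻¹ *ᵥ (x - μ)) t1 * (Sg⁻¹ *ᵥ (x - μ)) t3 * (Sg⁻¹ *ᵥ (x - μ)) t5 * (Sg⁻¹ *ᵥ (x - μ)) t6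
          + Sg⁻¹ t2 t5 * (Sg⁻¹ *ᵥ (x - μ)) t1 * (Sg⁻¹ *ᵥ (x - μ)) t3 * (Sg⁻¹ *ᵥ (x - μ)) t4 * (Sg⁻¹ *ᵥ (x - μ)) t6
          + Sg⁻¹ t2 t6 * (Sg⁻¹ *ᵥ (x - μ)) t1 * (Sg⁻¹ *ᵥ (x - μ)) t3 * (Sg⁻¹ *ᵥ (x - μ)) t4 * (Sg⁻¹ *ᵥ (x - μ)) t5
          + Sg⁻¹ t3 t4 * (Sg⁻¹ *ᵥ (x - μ)) t1 * (Sg⁻¹ *ᵥ (x - μ)) t2 * (Sg⁻¹ *ᵥ (x - μ)) t5 * (Sg⁻¹ *ᵥ (x - μ)) t6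
          + Sg⁻¹ t3 t5 * (Sg⁻¹ *ᵥ (x - μ)) t1 * (Sg⁻¹ *ᵥ (x - μ)) t2 * (Sg⁻¹ *ᵥ (x - μ)) t4 * (Sg⁻¹ *ᵥ (x - μ)) t6
          + Sg⁻¹ t3 t6 * (Sg⁻¹ *ᵥ (x - μ)) t1 * (Sg⁻¹ *ᵥ (x - μ)) t2 * (Sg⁻¹ *ᵥ (x - μ)) t4 * (Sg⁻¹ *ᵥ (x - μ)) t5
          + Sg⁻¹ t4 t5 * (Sg⁻¹ *ᵥ (x - μ)) t1 * (Sg⁻¹ *ᵥ (x - μ)) t2 * (Sg⁻¹ *ᵥ (x - μ)) t3 * (Sg⁻¹ *ᵥ (x - μ)) t6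
          + Sg⁻¹ t4 t6 * (Sg⁻¹ *ᵥ (x - μ)) t1 * (Sg⁻¹ *ᵥ (x - μ)) t2 * (Sg⁻¹ *ᵥ (x - μ)) t3 * (Sg⁻¹ *ᵥ (x - μ)) t5
          + Sg⁻¹ t5 t6 * (Sg⁻¹ *ᵥ (x - μ)) t1 * (Sg⁻¹ *ᵥ (x - μ)) t2 * (Sg⁻¹ *ᵥ (x - μ)) t3 * (Sg⁻¹ *ᵥ (x - μ)) t4)
        + (Sg⁻¹ *ᵥ (x - μ)) t1 * (Sg⁻¹ *ᵥ (x - μ)) t2 * (Sg⁻¹ *ᵥ (x - μ)) t3 * (Sg⁻¹ *ᵥ (x - μ)) t4 * (Sg⁻¹ *ᵥ (x - μ)) t5 * (Sg⁻¹ *ᵥ (x - μ)) t6)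
      * normpdf d x μ Sg := by
  have h0 : (fun μ' => normpdf d x μ' Sg) = (fun μ0 => (([(((1:ℝ) : ℝ), ([] : List (Fin d)))]).map (fun p => p.1 * Gg x Sg p.2 μ0)).sum) := by
    funext μ0
    simp [Gg_nil]
  have step0 : pd t6 (fun μ0 => (([(((1:ℝ) : ℝ), ([] : List (Fin d)))]).map (fun p => p.1 * Gg x Sg p.2 μ0)).sum) = (fun μ0 => (([(((1:ℝ) : ℝ), ([t6] : List (Fin d)))]).map (fun p => p.1 * Gg x Sg p.2 μ0)).sum) := by
    rw [pd_sum_Gg x Sg hSg t6]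
    funext μ0
    simp only [List.map_cons, List.map_nil, List.sum_cons, List.sum_nil, List.length_cons,
      List.length_nil, Fin.sum_univ_succ, Finset.univ_eq_empty, Finset.sum_empty,
      List.get_eq_getElem, Fin.val_zero, List.getElem_cons_zero, List.eraseIdx_cons_zero,
      Fin.val_succ, List.getElem_cons_succ, List.eraseIdx_cons_succ, Fin.sum_univ_zero,
      List.eraseIdx_nil]
    ring
  have step1 : pd t5 (fun μ0 => (([(((1:ℝ) : ℝ), ([t6] : List (Fin d)))]).map (fun p => p.1 * Gg x Sg p.2 μ0)).sum) = (fun μ0 => (([(((1:ℝ) : ℝ), ([t5, t6] : List (Fin d))), (((-((1:ℝ) * Sg⁻¹ t5 t6)) : ℝ), ([] : List (Fin d)))]).map (fun p => p.1 * Gg x Sg p.2 μ0)).sum) := by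
    rw [pd_sum_Gg x Sg hSg t5]
    funext μ0
    simp only [List.map_cons, List.map_nil, List.sum_cons, List.sum_nil, List.length_cons,
      List.length_nil, Fin.sum_univ_succ, Finset.univ_eq_empty, Finset.sum_empty,
      List.get_eq_getElem, Fin.val_zero, List.getElem_cons_zero, List.eraseIdx_cons_zero,
      Fin.val_succ, List.getElem_cons_succ, List.eraseIdx_cons_succ, Fin.sum_univ_zero,
      List.eraseIdx_nil]
    ring
  have step2 : pd t4 (fun μ0 => (([(((1:ℝ) : ℝ), ([t5, t6] : List (Fin d))), (((-((1:ℝ) * Sg⁻¹ t5 t6)) : ℝ), ([] : List (Fin d)))]).map (fun p => p.1 * Gg x Sg p.2 μ0)).sum) = (fun μ0 => (([(((1:ℝ) : ℝ), ([t4, t5, t6] : List (Fin d))), (((-((1:ℝ) * Sg⁻¹ t4 t5)) : ℝ), ([t6] : List (Fin d))), (((-((1:ℝ) * Sg⁻¹ t4 t6)) : ℝ), ([t5] : List (Fin d))), (((-((1:ℝ) * Sg⁻¹ t5 t6)) : ℝ), ([t4] : List (Fin d)))]).map (fun p => p.1 * Gg x Sg p.2 μ0)).sum) := by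
    rw [pd_sum_Gg x Sg hSg t4]
    funext μ0
    simp only [List.map_cons, List.map_nil, List.sum_cons, List.sum_nil, List.length_cons,
      List.length_nil, Fin.sum_univ_succ, Finset.univ_eq_empty, Finset.sum_empty,
      List.get_eq_getElem, Fin.val_zero, List.getElem_cons_zero, List.eraseIdx_cons_zero,
      Fin.val_succ, List.getElem_cons_succ, List.eraseIdx_cons_succ, Fin.sum_univ_zero,
      List.eraseIdx_nil]
    ring
  have step3 : pd t3 (fun μ0 => (([(((1:ℝ) : ℝ), ([t4, t5, t6] : List (Fin d))), (((-((1:ℝ) * Sg⁻¹ t4 t5)) : ℝ), ([t6] : List (Fin d))), (((-((1:ℝ) * Sg⁻¹ t4 t6)) : ℝ), ([t5] : List (Fin d))), (((-((1:ℝ) * Sg⁻¹ t5 t6)) : ℝ), ([t4] : List (Fin d)))]).map (fun p => p.1 * Gg x Sg p.2 μ0)).sum) = (fun μ0 => (([(((1:ℝ) : ℝ), ([t3, t4, t5, t6] : List (Fin d))), (((-((1:ℝ) * Sg⁻¹ t3 t4)) : ℝ), ([t5, t6] : List (Fin d))), (((-((1:ℝ) * Sg⁻¹ t3 t5)) : ℝ),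 ([t4, t6] : List (Fin d))), (((-((1:ℝ) * Sg⁻¹ t3 t6)) : ℝ), ([t4, t5] : List (Fin d))), (((-((1:ℝ) * Sg⁻¹ t4 t5)) : ℝ), ([t3, t6] : List (Fin d))), (((-((-((1:ℝ) * Sg⁻¹ t4 t5)) * Sg⁻¹ t3 t6)) : ℝ), ([] : List (Fin d))), (((-((1:ℝ) * Sg⁻¹ t4 t6)) : ℝ), ([t3, t5] : List (Fin d))), (((-((-((1:ℝ) * Sg⁻¹ t4 t6)) * Sg⁻¹ t3 t5)) : ℝ), ([] : List (Fin d))), (((-((1:ℝ) * Sg⁻¹ t5 t6)) : ℝ), ([t3, t4] : List (Fin d))), (((-((-((1:ℝ) * Sg⁻¹ t5 t6)) * Sg⁻¹ t3 t4)) : ℝ), ([] : List (Fin d)))]).map (fun p => p.1 * Gg x Sg p.2 μ0)).sum) := by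
    rw [pd_sum_Gg x Sg hSg t3]
    funext μ0
    simp only [List.map_cons, List.map_nil, List.sum_cons, List.sum_nil, List.length_cons,
      List.length_nil, Fin.sum_univ_succ, Finset.univ_eq_empty, Finset.sum_empty,
      List.get_eq_getElem, Fin.val_zero, List.getElem_cons_zero, List.eraseIdx_cons_zero,
      Fin.val_succ, List.getElem_cons_succ, List.eraseIdx_cons_succ, Fin.sum_univ_zero,
      List.eraseIdx_nil]
    ring
  have step4 : pd t2 (fun μ0 => (([(((1:ℝ) : ℝ), ([t3, t4, t5, t6] : List (Fin d))), (((-((1:ℝ) * Sg⁻¹ t3 t4)) : ℝ), ([t5, t6] : List (Fin d))), (((-((1:ℝ) * Sg⁻¹ t3 t5)) : ℝ), ([t4, t6] : List (Fin d))), (((-((1:ℝ) * Sg⁻¹ t3 t6)) : ℝ), ([t4, t5] : List (Fin d))), (((-((1:ℝ) * Sg⁻¹ t4 t5)) : ℝ), ([t3, t6] : List (Fin d))), (((-((-((1:ℝ) * Sg⁻¹ t4 t5)) * Sg⁻¹ t3 t6)) : ℝ), ([] : List (Fin d))), (((-((1:ℝ) * Sg⁻¹ t4 t6)) : ℝ),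 ([t3, t5] : List (Fin d))), (((-((-((1:ℝ) * Sg⁻¹ t4 t6)) * Sg⁻¹ t3 t5)) : ℝ), ([] : List (Fin d))), (((-((1:ℝ) * Sg⁻¹ t5 t6)) : ℝ), ([t3, t4] : List (Fin d))), (((-((-((1:ℝ) * Sg⁻¹ t5 t6)) * Sg⁻¹ t3 t4)) : ℝ), ([] : List (Fin d)))]).map (fun p => p.1 * Gg x Sg p.2 μ0)).sum) = (fun μ0 => (([(((1:ℝ) : ℝ), ([t2, t3, t4, t5, t6] : List (Fin d))), (((-((1:ℝ) * Sg⁻¹ t2 t3)) : ℝ), ([t4, t5, t6] : List (Fin d))), (((-((1:ℝ) * Sg⁻¹ t2 t4)) : ℝ), ([t3, t5, t6] : List (Fin d))), (((-((1:ℝ) * Sg⁻¹ t2 t5)) : ℝ), ([t3, t4, t6] : List (Fin d))), (((-((1:ℝ) * Sg⁻¹ t2 t6)) : ℝ), ([t3, t4, t5] : List (Fin d))), (((-((1:ℝ) * Sg⁻¹ t3 t4)) : ℝ), ([t2, t5, t6] : List (Fin d))), (((-((-((1:ℝ) * Sg⁻¹ t3 t4)) * Sg⁻¹ t2 t5)) :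 ℝ), ([t6] : List (Fin d))), (((-((-((1:ℝ) * Sg⁻¹ t3 t4)) * Sg⁻¹ t2 t6)) : ℝ), ([t5] : List (Fin d))), (((-((1:ℝ) * Sg⁻¹ t3 t5)) : ℝ), ([t2, t4, t6] : List (Fin d))), (((-((-((1:ℝ) * Sg⁻¹ t3 t5)) * Sg⁻¹ t2 t4)) : ℝ), ([t6] : List (Fin d))), (((-((-((1:ℝ) * Sg⁻¹ t3 t5)) * Sg⁻¹ t2 t6)) : ℝ), ([t4] : List (Fin d))), (((-((1:ℝ) * Sg⁻¹ t3 t6)) : ℝ), ([t2, t4, t5] : List (Fin d))), (((-((-((1:ℝ) * Sg⁻¹ t3 t6)) * Sg⁻¹ t2 t4)) : ℝ), ([t5] : List (Fin d))), (((-((-((1:ℝ) * Sg⁻¹ t3 t6)) * Sg⁻¹ t2 t5)) : ℝ), ([t4] : List (Fin d))), (((-((1:ℝ) * Sg⁻¹ t4 t5)) : ℝ), ([t2, t3, t6] : List (Fin d))), (((-((-((1:ℝ) * Sg⁻¹ t4 t5)) * Sg⁻¹ t2 t3)) : ℝ), ([t6] : List (Fin d))), (((-((-((1:ℝ) * Sg⁻¹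 t4 t5)) * Sg⁻¹ t2 t6)) : ℝ), ([t3] : List (Fin d))), (((-((-((1:ℝ) * Sg⁻¹ t4 t5)) * Sg⁻¹ t3 t6)) : ℝ), ([t2] : List (Fin d))), (((-((1:ℝ) * Sg⁻¹ t4 t6)) : ℝ), ([t2, t3, t5] : List (Fin d))), (((-((-((1:ℝ) * Sg⁻¹ t4 t6)) * Sg⁻¹ t2 t3)) : ℝ), ([t5] : List (Fin d))), (((-((-((1:ℝ) * Sg⁻¹ t4 t6)) * Sg⁻¹ t2 t5)) : ℝ), ([t3] : List (Fin d))), (((-((-((1:ℝ) * Sg⁻¹ t4 t6)) * Sg⁻¹ t3 t5)) : ℝ), ([t2] : List (Fin d))), (((-((1:ℝ) * Sg⁻¹ t5 t6)) : ℝ), ([t2, t3, t4] : List (Fin d))), (((-((-((1:ℝ) * Sg⁻¹ t5 t6)) * Sg⁻¹ t2 t3)) : ℝ), ([t4] : List (Fin d))), (((-((-((1:ℝ) * Sg⁻¹ t5 t6)) * Sg⁻¹ t2 t4)) : ℝ), ([t3] : List (Fin d))), (((-((-((1:ℝ) * Sg⁻¹ t5 t6)) * Sg⁻¹ t3 t4))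 : ℝ), ([t2] : List (Fin d)))]).map (fun p => p.1 * Gg x Sg p.2 μ0)).sum) := by
    rw [pd_sum_Gg x Sg hSg t2]
    funext μ0
    simp only [List.map_cons, List.map_nil, List.sum_cons, List.sum_nil, List.length_cons,
      List.length_nil, Fin.sum_univ_succ, Finset.univ_eq_empty, Finset.sum_empty,
      List.get_eq_getElem, Fin.val_zero, List.getElem_cons_zero, List.eraseIdx_cons_zero,
      Fin.val_succ, List.getElem_cons_succ, List.eraseIdx_cons_succ, Fin.sum_univ_zero,
      List.eraseIdx_nil]
    ring
  have step5 : pd t1 (fun μ0 => (([(((1:ℝ) : ℝ), ([t2, t3, t4, t5, t6] : List (Fin d))), (((-((1:ℝ) * Sg⁻¹ t2 t3)) : ℝ), ([t4, t5, t6] : List (Fin d))), (((-((1:ℝ) * Sg⁻¹ t2 t4)) : ℝ), ([t3, t5, t6] : List (Fin d))), (((-((1:ℝ) * Sg⁻¹ t2 t5)) : ℝ), ([t3, t4, t6] : List (Fin d))), (((-((1:ℝ) * Sg⁻¹ t2 t6)) : ℝ), ([t3, t4, t5] : List (Fin d))), (((-((1:ℝ) * Sg⁻¹ t3 t4)) :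 ℝ), ([t2, t5, t6] : List (Fin d))), (((-((-((1:ℝ) * Sg⁻¹ t3 t4)) * Sg⁻¹ t2 t5)) : ℝ), ([t6] : List (Fin d))), (((-((-((1:ℝ) * Sg⁻¹ t3 t4)) * Sg⁻¹ t2 t6)) : ℝ), ([t5] : List (Fin d))), (((-((1:ℝ) * Sg⁻¹ t3 t5)) : ℝ), ([t2, t4, t6] : List (Fin d))), (((-((-((1:ℝ) * Sg⁻¹ t3 t5)) * Sg⁻¹ t2 t4)) : ℝ), ([t6] : List (Fin d))), (((-((-((1:ℝ) * Sg⁻¹ t3 t5)) * Sg⁻¹ t2 t6)) : ℝ), ([t4] : List (Fin d))), (((-((1:ℝ) * Sg⁻¹ t3 t6)) : ℝ), ([t2, t4, t5] : List (Fin d))), (((-((-((1:ℝ) * Sg⁻¹ t3 t6)) * Sg⁻¹ t2 t4)) : ℝ), ([t5] : List (Fin d))), (((-((-((1:ℝ) * Sg⁻¹ t3 t6)) * Sg⁻¹ t2 t5)) : ℝ), ([t4] : List (Fin d))), (((-((1:ℝ) * Sg⁻¹ t4 t5)) : ℝ), ([t2, t3, t6] : List (Fin d))), (((-((-((1:ℝ)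 * Sg⁻¹ t4 t5)) * Sg⁻¹ t2 t3)) : ℝ), ([t6] : List (Fin d))), (((-((-((1:ℝ) * Sg⁻¹ t4 t5)) * Sg⁻¹ t2 t6)) : ℝ), ([t3] : List (Fin d))), (((-((-((1:ℝ) * Sg⁻¹ t4 t5)) * Sg⁻¹ t3 t6)) : ℝ), ([t2] : List (Fin d))), (((-((1:ℝ) * Sg⁻¹ t4 t6)) : ℝ), ([t2, t3, t5] : List (Fin d))), (((-((-((1:ℝ) * Sg⁻¹ t4 t6)) * Sg⁻¹ t2 t3)) : ℝ), ([t5] : List (Fin d))), (((-((-((1:ℝ) * Sg⁻¹ t4 t6)) * Sg⁻¹ t2 t5)) : ℝ), ([t3] : List (Fin d))), (((-((-((1:ℝ) * Sg⁻¹ t4 t6)) * Sg⁻¹ t3 t5)) : ℝ), ([t2] : List (Fin d))), (((-((1:ℝ) * Sg⁻¹ t5 t6)) : ℝ), ([t2, t3, t4] : List (Fin d))), (((-((-((1:ℝ) * Sg⁻¹ t5 t6)) * Sg⁻¹ t2 t3)) : ℝ), ([t4] : List (Fin d))), (((-((-((1:ℝ) * Sg⁻¹ t5 t6)) * Sg⁻¹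 t2 t4)) : ℝ), ([t3] : List (Fin d))), (((-((-((1:ℝ) * Sg⁻¹ t5 t6)) * Sg⁻¹ t3 t4)) : ℝ), ([t2] : List (Fin d)))]).map (fun p => p.1 * Gg x Sg p.2 μ0)).sum) = (fun μ0 => (([(((1:ℝ) : ℝ), ([t1, t2, t3, t4, t5, t6] : List (Fin d))), (((-((1:ℝ) * Sg⁻¹ t1 t2)) : ℝ), ([t3, t4, t5, t6] : List (Fin d))), (((-((1:ℝ) * Sg⁻¹ t1 t3)) : ℝ), ([t2, t4, t5, t6] : List (Fin d))), (((-((1:ℝ) * Sg⁻¹ t1 t4)) : ℝ), ([t2, t3, t5, t6] : List (Fin d))), (((-((1:ℝ) * Sg⁻¹ t1 t5)) : ℝ), ([t2, t3, t4, t6] : List (Fin d))), (((-((1:ℝ) * Sg⁻¹ t1 t6)) : ℝ), ([t2, t3, t4, t5] : List (Fin d))), (((-((1:ℝ) * Sg⁻¹ t2 t3)) : ℝ), ([t1, t4, t5, t6] : List (Fin d))), (((-((-((1:ℝ) * Sg⁻¹ t2 t3)) * Sg⁻¹ t1 t4)) : ℝ), ([t5, t6] : List (Fin d))), (((-((-((1:ℝ)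 * Sg⁻¹ t2 t3)) * Sg⁻¹ t1 t5)) : ℝ), ([t4, t6] : List (Fin d))), (((-((-((1:ℝ) * Sg⁻¹ t2 t3)) * Sg⁻¹ t1 t6)) : ℝ), ([t4, t5] : List (Fin d))), (((-((1:ℝ) * Sg⁻¹ t2 t4)) : ℝ), ([t1, t3, t5, t6] : List (Fin d))), (((-((-((1:ℝ) * Sg⁻¹ t2 t4)) * Sg⁻¹ t1 t3)) : ℝ), ([t5, t6] : List (Fin d))), (((-((-((1:ℝ) * Sg⁻¹ t2 t4)) * Sg⁻¹ t1 t5)) : ℝ), ([t3, t6] : List (Fin d))), (((-((-((1:ℝ) * Sg⁻¹ t2 t4)) * Sg⁻¹ t1 t6)) : ℝ), ([t3, t5] : List (Fin d))), (((-((1:ℝ) * Sg⁻¹ t2 t5)) : ℝ), ([t1, t3, t4, t6] : List (Fin d))), (((-((-((1:ℝ) * Sg⁻¹ t2 t5)) * Sg⁻¹ t1 t3)) : ℝ), ([t4, t6] : List (Fin d))), (((-((-((1:ℝ) * Sg⁻¹ t2 t5)) * Sg⁻¹ t1 t4)) : ℝ), ([t3, t6] : List (Fin d))), (((-((-((1:ℝ)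 * Sg⁻¹ t2 t5)) * Sg⁻¹ t1 t6)) : ℝ), ([t3, t4] : List (Fin d))), (((-((1:ℝ) * Sg⁻¹ t2 t6)) : ℝ), ([t1, t3, t4, t5] : List (Fin d))), (((-((-((1:ℝ) * Sg⁻¹ t2 t6)) * Sg⁻¹ t1 t3)) : ℝ), ([t4, t5] : List (Fin d))), (((-((-((1:ℝ) * Sg⁻¹ t2 t6)) * Sg⁻¹ t1 t4)) : ℝ), ([t3, t5] : List (Fin d))), (((-((-((1:ℝ) * Sg⁻¹ t2 t6)) * Sg⁻¹ t1 t5)) : ℝ), ([t3, t4] : List (Fin d))), (((-((1:ℝ) * Sg⁻¹ t3 t4)) : ℝ), ([t1, t2, t5, t6] : List (Fin d))), (((-((-((1:ℝ) * Sg⁻¹ t3 t4)) * Sg⁻¹ t1 t2)) : ℝ), ([t5, t6] : List (Fin d))), (((-((-((1:ℝ) * Sg⁻¹ t3 t4)) * Sg⁻¹ t1 t5)) : ℝ), ([t2, t6] : List (Fin d))), (((-((-((1:ℝ) * Sg⁻¹ t3 t4)) * Sg⁻¹ t1 t6)) : ℝ), ([t2, t5] : List (Fin d))), (((-((-((1:ℝ)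 * Sg⁻¹ t3 t4)) * Sg⁻¹ t2 t5)) : ℝ), ([t1, t6] : List (Fin d))), (((-((-((-((1:ℝ) * Sg⁻¹ t3 t4)) * Sg⁻¹ t2 t5)) * Sg⁻¹ t1 t6)) : ℝ), ([] : List (Fin d))), (((-((-((1:ℝ) * Sg⁻¹ t3 t4)) * Sg⁻¹ t2 t6)) : ℝ), ([t1, t5] : List (Fin d))), (((-((-((-((1:ℝ) * Sg⁻¹ t3 t4)) * Sg⁻¹ t2 t6)) * Sg⁻¹ t1 t5)) : ℝ), ([] : List (Fin d))), (((-((1:ℝ) * Sg⁻¹ t3 t5)) : ℝ), ([t1, t2, t4, t6] : List (Fin d))), (((-((-((1:ℝ) * Sg⁻¹ t3 t5)) * Sg⁻¹ t1 t2)) : ℝ), ([t4, t6] : List (Fin d))), (((-((-((1:ℝ) * Sg⁻¹ t3 t5)) * Sg⁻¹ t1 t4)) : ℝ), ([t2, t6] : List (Fin d))), (((-((-((1:ℝ) * Sg⁻¹ t3 t5)) * Sg⁻¹ t1 t6)) : ℝ), ([t2, t4] : List (Fin d))), (((-((-((1:ℝ) * Sg⁻¹ t3 t5)) * Sg⁻¹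 t2 t4)) : ℝ), ([t1, t6] : List (Fin d))), (((-((-((-((1:ℝ) * Sg⁻¹ t3 t5)) * Sg⁻¹ t2 t4)) * Sg⁻¹ t1 t6)) : ℝ), ([] : List (Fin d))), (((-((-((1:ℝ) * Sg⁻¹ t3 t5)) * Sg⁻¹ t2 t6)) : ℝ), ([t1, t4] : List (Fin d))), (((-((-((-((1:ℝ) * Sg⁻¹ t3 t5)) * Sg⁻¹ t2 t6)) * Sg⁻¹ t1 t4)) : ℝ), ([] : List (Fin d))), (((-((1:ℝ) * Sg⁻¹ t3 t6)) : ℝ), ([t1, t2, t4, t5] : List (Fin d))), (((-((-((1:ℝ) * Sg⁻¹ t3 t6)) * Sg⁻¹ t1 t2)) : ℝ), ([t4, t5] : List (Fin d))), (((-((-((1:ℝ) * Sg⁻¹ t3 t6)) * Sg⁻¹ t1 t4)) : ℝ), ([t2, t5] : List (Fin d))), (((-((-((1:ℝ) * Sg⁻¹ t3 t6)) * Sg⁻¹ t1 t5)) : ℝ), ([t2, t4] : List (Fin d))), (((-((-((1:ℝ) * Sg⁻¹ t3 t6)) * Sg⁻¹ t2 t4)) : ℝ), ([t1, t5] : List (Fin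 d))), (((-((-((-((1:ℝ) * Sg⁻¹ t3 t6)) * Sg⁻¹ t2 t4)) * Sg⁻¹ t1 t5)) : ℝ), ([] : List (Fin d))), (((-((-((1:ℝ) * Sg⁻¹ t3 t6)) * Sg⁻¹ t2 t5)) : ℝ), ([t1, t4] : List (Fin d))), (((-((-((-((1:ℝ) * Sg⁻¹ t3 t6)) * Sg⁻¹ t2 t5)) * Sg⁻¹ t1 t4)) : ℝ), ([] : List (Fin d))), (((-((1:ℝ) * Sg⁻¹ t4 t5)) : ℝ), ([t1, t2, t3, t6] : List (Fin d))), (((-((-((1:ℝ) * Sg⁻¹ t4 t5)) * Sg⁻¹ t1 t2)) : ℝ), ([t3, t6] : List (Fin d))), (((-((-((1:ℝ) * Sg⁻¹ t4 t5)) * Sg⁻¹ t1 t3)) : ℝ), ([t2, t6] : List (Fin d))), (((-((-((1:ℝ) * Sg⁻¹ t4 t5)) * Sg⁻¹ t1 t6)) : ℝ), ([t2, t3] : List (Fin d))), (((-((-((1:ℝ) * Sg⁻¹ t4 t5)) * Sg⁻¹ t2 t3)) : ℝ), ([t1, t6] : List (Fin d))), (((-((-((-((1:ℝ) * Sg⁻¹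 t4 t5)) * Sg⁻¹ t2 t3)) * Sg⁻¹ t1 t6)) : ℝ), ([] : List (Fin d))), (((-((-((1:ℝ) * Sg⁻¹ t4 t5)) * Sg⁻¹ t2 t6)) : ℝ), ([t1, t3] : List (Fin d))), (((-((-((-((1:ℝ) * Sg⁻¹ t4 t5)) * Sg⁻¹ t2 t6)) * Sg⁻¹ t1 t3)) : ℝ), ([] : List (Fin d))), (((-((-((1:ℝ) * Sg⁻¹ t4 t5)) * Sg⁻¹ t3 t6)) : ℝ), ([t1, t2] : List (Fin d))), (((-((-((-((1:ℝ) * Sg⁻¹ t4 t5)) * Sg⁻¹ t3 t6)) * Sg⁻¹ t1 t2)) : ℝ), ([] : List (Fin d))), (((-((1:ℝ) * Sg⁻¹ t4 t6)) : ℝ), ([t1, t2, t3, t5] : List (Fin d))), (((-((-((1:ℝ) * Sg⁻¹ t4 t6)) * Sg⁻¹ t1 t2)) : ℝ), ([t3, t5] : List (Fin d))), (((-((-((1:ℝ) * Sg⁻¹ t4 t6)) * Sg⁻¹ t1 t3)) : ℝ), ([t2, t5] : List (Fin d))), (((-((-((1:ℝ) * Sg⁻¹ t4 t6)) * Sg⁻¹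 t1 t5)) : ℝ), ([t2, t3] : List (Fin d))), (((-((-((1:ℝ) * Sg⁻¹ t4 t6)) * Sg⁻¹ t2 t3)) : ℝ), ([t1, t5] : List (Fin d))), (((-((-((-((1:ℝ) * Sg⁻¹ t4 t6)) * Sg⁻¹ t2 t3)) * Sg⁻¹ t1 t5)) : ℝ), ([] : List (Fin d))), (((-((-((1:ℝ) * Sg⁻¹ t4 t6)) * Sg⁻¹ t2 t5)) : ℝ), ([t1, t3] : List (Fin d))), (((-((-((-((1:ℝ) * Sg⁻¹ t4 t6)) * Sg⁻¹ t2 t5)) * Sg⁻¹ t1 t3)) : ℝ), ([] : List (Fin d))), (((-((-((1:ℝ) * Sg⁻¹ t4 t6)) * Sg⁻¹ t3 t5)) : ℝ), ([t1, t2] : List (Fin d))), (((-((-((-((1:ℝ) * Sg⁻¹ t4 t6)) * Sg⁻¹ t3 t5)) * Sg⁻¹ t1 t2)) : ℝ), ([] : List (Fin d))), (((-((1:ℝ) * Sg⁻¹ t5 t6)) : ℝ), ([t1, t2, t3, t4] : List (Fin d))), (((-((-((1:ℝ) * Sg⁻¹ t5 t6)) * Sg⁻¹ t1 t2)) : ℝ),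 ([t3, t4] : List (Fin d))), (((-((-((1:ℝ) * Sg⁻¹ t5 t6)) * Sg⁻¹ t1 t3)) : ℝ), ([t2, t4] : List (Fin d))), (((-((-((1:ℝ) * Sg⁻¹ t5 t6)) * Sg⁻¹ t1 t4)) : ℝ), ([t2, t3] : List (Fin d))), (((-((-((1:ℝ) * Sg⁻¹ t5 t6)) * Sg⁻¹ t2 t3)) : ℝ), ([t1, t4] : List (Fin d))), (((-((-((-((1:ℝ) * Sg⁻¹ t5 t6)) * Sg⁻¹ t2 t3)) * Sg⁻¹ t1 t4)) : ℝ), ([] : List (Fin d))), (((-((-((1:ℝ) * Sg⁻¹ t5 t6)) * Sg⁻¹ t2 t4)) : ℝ), ([t1, t3] : List (Fin d))), (((-((-((-((1:ℝ) * Sg⁻¹ t5 t6)) * Sg⁻¹ t2 t4)) * Sg⁻¹ t1 t3)) : ℝ), ([] : List (Fin d))), (((-((-((1:ℝ) * Sg⁻¹ t5 t6)) * Sg⁻¹ t3 t4)) : ℝ), ([t1, t2] : List (Fin d))), (((-((-((-((1:ℝ) * Sg⁻¹ t5 t6)) * Sg⁻¹ t3 t4)) * Sg⁻¹ t1 t2))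 : ℝ), ([] : List (Fin d)))]).map (fun p => p.1 * Gg x Sg p.2 μ0)).sum) := by
    rw [pd_sum_Gg x Sg hSg t1]
    funext μ0
    simp only [List.map_cons, List.map_nil, List.sum_cons, List.sum_nil, List.length_cons,
      List.length_nil, Fin.sum_univ_succ, Finset.univ_eq_empty, Finset.sum_empty,
      List.get_eq_getElem, Fin.val_zero, List.getElem_cons_zero, List.eraseIdx_cons_zero,
      Fin.val_succ, List.getElem_cons_succ, List.eraseIdx_cons_succ, Fin.sum_univ_zero,
      List.eraseIdx_nil]
    ring
  rw [h0, step0, step1, step2, step3, step4, step5]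
  simp only [List.map_cons, List.map_nil, List.sum_cons, List.sum_nil]
  simp only [Gg_cons, Gg_nil, zf]
  ring

end
end

section
/- Let x, μ ∈ ℝ^d, let v₀ ∈ ℝ^{d(d+1)/2} be such that S(v₀) is positive definite, let c̃ ∈ ℝ, and define φ(u) := f_v(x; μ, v₀ + c̃·w(uuᵀ)) for u ∈ ℝ^d in a neighborhood of 0. Then for all t1, t2, t3, t4 ∈ {1,…,d}: (i) ∂φ/∂u_{t1}(0) = 0; (ii) ∂²φ/∂u_{t1}∂u_{t2}(0) = 2c̃ · ∂f_v(x;μ,v₀)/∂v_{t1t2}; (iii) ∂³φ/∂u_{t1}∂u_{t2}∂u_{t3}(0) = 0; (iv) ∂⁴φ/∂u_{t1}∂u_{t2}∂u_{t3}∂u_{t4}(0) = 4c̃² ( ∂²f_v/∂v_{t1t4}∂v_{t2t3} + ∂²f_v/∂v_{t1t3}∂v_{t2t4} + ∂²f_v/∂v_{t1t2}∂v_{t3t4} )(x;μ,v₀). -/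
open Real Matrix

noncomputable section

/-- The symmetric matrix `S(v)` built from the coordinates `v = (v_{ij})_{i ≤ j}`,
indexed by unordered pairs (this encodes the convention `v_{ij} = v_{ji}`). -/
def Smat (d : ℕ) (v : Sym2 (Fin d) → ℝ) : Matrix (Fin d) (Fin d) ℝ :=
  Matrix.of fun i j => if i = j then v s(i, i) else v s(i, j) / 2

/-- Normal density in the `(μ, v)` parameterization. -/
def normpdfV (d : ℕ) (x μ : Fin d → ℝ) (v : Sym2 (Fin d) → ℝ) : ℝ :=
  normpdf d x μ (Smat d v)

/-- The half-vectorization `w(A)` of a symmetric matrix `A`: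
`w(A)_{ii} = A_{ii}` and `w(A)_{ij} = 2 A_{ij} = A_{ij} + A_{ji}` for `i ≠ j`. -/
def wvec (d : ℕ) (A : Matrix (Fin d) (Fin d) ℝ) : Sym2 (Fin d) → ℝ :=
  Sym2.lift ⟨fun i j => if i = j then A i i else A i j + A j i, by
    intro i j
    simp only []
    by_cases h : i = j
    · subst h; rfl
    · rw [if_neg h, if_neg fun hji => h hji.symm]
      ring⟩

open ContDiff
section Aux
variable {d : ℕ}

def bfun (u w : Fin d → ℝ) : Sym2 (Fin d) → ℝ :=
  Sym2.lift ⟨fun i j => if i = j then u i * w i else u i * w j + u j * w i, by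
    intro i j
    by_cases h : i = j
    · subst h; rfl
    · simp only [if_neg h, if_neg (Ne.symm h)]; ring⟩

lemma bfun_mk (u w : Fin d → ℝ) (i j : Fin d) :
    bfun u w s(i, j) = if i = j then u i * w i else u i * w j + u j * w i := rfl

lemma wvec_vecMulVec (u : Fin d → ℝ) (e : Sym2 (Fin d)) :
    wvec d (vecMulVec u u) e = bfun u u e := by
  induction e using Sym2.ind with
  | _ i j =>
    simp only [wvec, bfun, Sym2.lift_mk, Matrix.vecMulVec_apply]

lemma bfun_comm (u w : Fin d → ℝ) : bfun u w = bfun w u := by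
  funext e
  induction e using Sym2.ind with
  | _ i j =>
    simp only [bfun_mk]
    split_ifs <;> try ring

lemma bfun_single (s t : Fin d) :
    bfun (Pi.single s (1:ℝ)) (Pi.single t 1) = Pi.single s(s, t) 1 := by
  funext e
  induction e using Sym2.ind with
  | _ i j =>
    simp only [bfun_mk, Pi.single_apply, Sym2.eq_iff]
    split_ifs <;> simp_all <;> try ring

def bLin (d : ℕ) : (Fin d → ℝ) →ₗ[ℝ] (Fin d → ℝ) →ₗ[ℝ] (Sym2 (Fin d) → ℝ) :=
  LinearMap.mk₂ ℝ bfun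
    (by
      intro u u' w; funext e
      induction e using Sym2.ind with
      | _ i j => simp only [bfun_mk, Pi.add_apply]; split_ifs <;> ring)
    (by
      intro a u w; funext e
      induction e using Sym2.ind with
      | _ i j => simp only [bfun_mk, Pi.add_apply, Pi.smul_apply, smul_eq_mul]
                 split_ifs <;> ring)
    (by
      intro u w w'; funext e
      induction e using Sym2.ind with
      | _ i j => simp only [bfun_mk, Pi.add_apply]; split_ifs <;> ring)
    (by
      intro a u w; funext e
      induction e using Sym2.ind with
      | _ i j => simp only [bfun_mk, Pi.add_apply, Pi.smul_apply, smul_eq_mul]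
                 split_ifs <;> ring)

def bCLM (d : ℕ) : (Fin d → ℝ) →L[ℝ] (Fin d → ℝ) →L[ℝ] (Sym2 (Fin d) → ℝ) :=
  LinearMap.toContinuousLinearMap
    ((LinearMap.toContinuousLinearMap.toLinearMap).comp (bLin d))

@[simp] lemma bCLM_apply (u w : Fin d → ℝ) : bCLM d u w = bfun u w := by
  simp [bCLM, bLin]

end Aux
section Smooth
variable {X : Type*} [NormedAddCommGroup X] [NormedSpace ℝ X]

lemma contDiff_finset_prod {ι : Type*} (s : Finset ι) (f : ι → X → ℝ)
    (h : ∀ i, ContDiff ℝ ∞ (f i)) :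
    ContDiff ℝ ∞ fun x => ∏ i ∈ s, f i x := by
  classical
  induction s using Finset.induction with
  | empty => simpa using contDiff_const
  | insert _ _ hni ih =>
    simp only [Finset.prod_insert hni]
    exact (h _).mul ih

lemma contDiff_det_entries {n : ℕ} (M : X → Matrix (Fin n) (Fin n) ℝ)
    (h : ∀ i j, ContDiff ℝ ∞ fun x => M x i j) :
    ContDiff ℝ ∞ fun x => (M x).det := by
  simp only [Matrix.det_apply, Units.smul_def, zsmul_eq_mul]
  exact ContDiff.sum fun σ _ =>
    contDiff_const.mul (contDiff_finset_prod _ _ fun i => h (σ i) i)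

lemma contDiff_Smat_entry {d : ℕ} (i j : Fin d) :
    ContDiff ℝ ∞ fun v : Sym2 (Fin d) → ℝ => Smat d v i j := by
  by_cases h : i = j
  · simpa [Smat, h] using (contDiff_apply (𝕜 := ℝ) (E := ℝ) (n := ∞) s(j, j))
  · simpa [Smat, h] using (ContinuousLinearMap.proj (R := ℝ) (φ := fun _ : Sym2 (Fin d) => ℝ)
      s(i, j)).contDiff.div_const 2

lemma contDiff_Smat_det {d : ℕ} :
    ContDiff ℝ ∞ fun v : Sym2 (Fin d) → ℝ => (Smat d v).det :=
  contDiff_det_entries _ fun i j => contDiff_Smat_entry i j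

lemma contDiff_Smat_adjugate {d : ℕ} (i j : Fin d) :
    ContDiff ℝ ∞ fun v : Sym2 (Fin d) → ℝ => (Smat d v).adjugate i j := by
  simp only [Matrix.adjugate_apply]
  apply contDiff_det_entries
  intro a b
  by_cases h : a = j
  · simp only [h, Matrix.updateRow_self]
    exact contDiff_const
  · simp only [Matrix.updateRow_ne h]
    exact contDiff_Smat_entry a b

lemma contDiffAt_normpdfV {d : ℕ} (x μ : Fin d → ℝ) {v : Sym2 (Fin d) → ℝ}
    (hv : (Smat d v).det ≠ 0) :
    ContDiffAt ℝ ∞ (normpdfV d x μ) v := by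
  have hform : normpdfV d x μ = fun v' =>
      (2 * π) ^ (-(d : ℝ) / 2) * (Smat d v').det ^ (-(1 : ℝ) / 2) *
        Real.exp (-(∑ i, (x - μ) i *
          ∑ j, ((Smat d v').det⁻¹ * (Smat d v').adjugate i j * (x - μ) j)) / 2) := by
    funext v'
    simp only [normpdfV, normpdf, Matrix.inv_def, Ring.inverse_eq_inv', dotProduct,
      Matrix.mulVec, Matrix.smul_apply, smul_eq_mul, dotProduct]
    try ring_nf
  rw [hform]
  have hdet : ContDiffAt ℝ ∞ (fun v' : Sym2 (Fin d) → ℝ => (Smat d v').det) v :=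
    contDiff_Smat_det.contDiffAt
  have hinv : ContDiffAt ℝ ∞ (fun v' : Sym2 (Fin d) → ℝ => (Smat d v').det⁻¹) v :=
    hdet.inv hv
  have hrpow : ContDiffAt ℝ ∞ (fun v' : Sym2 (Fin d) → ℝ =>
      (Smat d v').det ^ (-(1 : ℝ) / 2)) v :=
    hdet.rpow_const_of_ne hv
  refine (contDiffAt_const.mul hrpow).mul (Real.contDiff_exp.contDiffAt.comp v ?_)
  refine (ContDiffAt.sum fun i _ => contDiffAt_const.mul (ContDiffAt.sum fun j _ => ?_)).neg.div_const 2
  exact (hinv.mul (contDiff_Smat_adjugate i j).contDiffAt).mul contDiffAt_const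
end Smooth
section DerivAux
variable {d : ℕ}

def hmap (d : ℕ) (v₀ : Sym2 (Fin d) → ℝ) (c : ℝ) (u : Fin d → ℝ) : Sym2 (Fin d) → ℝ :=
  fun e => v₀ e + c * wvec d (vecMulVec u u) e

def Lc (d : ℕ) (c : ℝ) (u : Fin d → ℝ) : (Fin d → ℝ) →L[ℝ] (Sym2 (Fin d) → ℝ) :=
  c • (bCLM d u + (bCLM d).flip u)

lemma Lc_apply (c : ℝ) (u w : Fin d → ℝ) :
    Lc d c u w = c • (bfun u w + bfun w u) := by
  simp [Lc]

lemma Lc_swap (c : ℝ) (u w : Fin d → ℝ) : Lc d c u w = Lc d c w u := by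
  rw [Lc_apply, Lc_apply, bfun_comm]

lemma bfun_zero_left (w : Fin d → ℝ) : bfun (0 : Fin d → ℝ) w = 0 := by
  funext e
  induction e using Sym2.ind with
  | _ i j => simp [bfun_mk]

lemma Lc_zero (c : ℝ) : Lc d c (0 : Fin d → ℝ) = 0 := by
  ext w e
  rw [Lc_apply]
  simp [bfun_zero_left, bfun_comm w 0, bfun_zero_left]

lemma Lc_single (c : ℝ) (s t : Fin d) :
    Lc d c (Pi.single s 1) (Pi.single t 1) = (2 * c) • (Pi.single s(s, t) 1 :
      Sym2 (Fin d) → ℝ) := by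
  rw [Lc_apply, bfun_single, bfun_single]
  have : s(t, s) = s(s, t) := Sym2.eq_swap
  rw [this]
  funext e
  simp [Pi.smul_apply, smul_eq_mul]
  ring

lemma hmap_zero (v₀ : Sym2 (Fin d) → ℝ) (c : ℝ) : hmap d v₀ c 0 = v₀ := by
  funext e
  simp only [hmap, wvec_vecMulVec, bfun_zero_left]
  simp

lemma hasFDerivAt_hmap (v₀ : Sym2 (Fin d) → ℝ) (c : ℝ) (u : Fin d → ℝ) :
    HasFDerivAt (hmap d v₀ c) (Lc d c u) u := by
  have h1 : HasFDerivAt (fun u' : Fin d → ℝ => bCLM d u' u')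
      (bCLM d u + (bCLM d).flip u) u := by
    have h2 := ((bCLM d).hasFDerivAt (x := u)).clm_apply (hasFDerivAt_id u)
    simpa using h2
  have h3 := (h1.const_smul c).const_add v₀
  have hfun : hmap d v₀ c = fun u' : Fin d → ℝ => v₀ + c • (bCLM d u' u') := by
    funext u' e
    simp [hmap, wvec_vecMulVec, Pi.smul_apply, smul_eq_mul]
  rw [hfun]
  exact h3

lemma continuous_hmap (v₀ : Sym2 (Fin d) → ℝ) (c : ℝ) : Continuous (hmap d v₀ c) :=
  Differentiable.continuous (𝕜 := ℝ) fun u => (hasFDerivAt_hmap v₀ c u).differentiableAt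
end DerivAux
section MainAux
open Filter Topology

lemma pd_of_hasFDerivAt {ι : Type*} [Fintype ι] [DecidableEq ι] {f : (ι → ℝ) → ℝ}
    {D : (ι → ℝ) →L[ℝ] ℝ} {a : ι → ℝ} (t : ι) (hf : HasFDerivAt f D a) :
    pd t f a = D (Pi.single t 1) := by
  simp only [pd, hf.fderiv]

lemma pd_congr_at {ι : Type*} [Fintype ι] [DecidableEq ι] (t : ι)
    {f g : (ι → ℝ) → ℝ} {a : ι → ℝ} (h : f =ᶠ[nhds a] g) :
    pd t f a = pd t g a := by
  simp only [pd]
  rw [h.fderiv_eq]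

lemma pd_congr_nhds {ι : Type*} [Fintype ι] [DecidableEq ι] (t : ι)
    {f g : (ι → ℝ) → ℝ} {a : ι → ℝ} (h : f =ᶠ[nhds a] g) :
    pd t f =ᶠ[nhds a] pd t g := by
  filter_upwards [h.eventually_nhds] with u hu
  exact pd_congr_at t hu

end MainAux
noncomputable instance diCLMNormed (d : ℕ) : NormedAddCommGroup ((Sym2 (Fin d) → ℝ) →L[ℝ] (Sym2 (Fin d) → ℝ) →L[ℝ] ℝ) :=
  ContinuousLinearMap.toNormedAddCommGroup (E := Sym2 (Fin d) → ℝ) (F := (Sym2 (Fin d) → ℝ) →L[ℝ] ℝ) (σ₁₂ := RingHom.id ℝ)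
noncomputable instance diCLMSpace (d : ℕ) : NormedSpace ℝ ((Sym2 (Fin d) → ℝ) →L[ℝ] (Sym2 (Fin d) → ℝ) →L[ℝ] ℝ) :=
  ContinuousLinearMap.toNormedSpace (E := Sym2 (Fin d) → ℝ) (F := (Sym2 (Fin d) → ℝ) →L[ℝ] ℝ) (σ₁₂ := RingHom.id ℝ)
noncomputable instance triCLMNormed (d : ℕ) : NormedAddCommGroup ((Sym2 (Fin d) → ℝ) →L[ℝ] (Sym2 (Fin d) → ℝ) →L[ℝ] (Sym2 (Fin d) → ℝ) →L[ℝ] ℝ) :=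
  ContinuousLinearMap.toNormedAddCommGroup (E := Sym2 (Fin d) → ℝ) (F := (Sym2 (Fin d) → ℝ) →L[ℝ] (Sym2 (Fin d) → ℝ) →L[ℝ] ℝ) (σ₁₂ := RingHom.id ℝ)
noncomputable instance triCLMSpace (d : ℕ) : NormedSpace ℝ ((Sym2 (Fin d) → ℝ) →L[ℝ] (Sym2 (Fin d) → ℝ) →L[ℝ] (Sym2 (Fin d) → ℝ) →L[ℝ] ℝ) :=
  ContinuousLinearMap.toNormedSpace (E := Sym2 (Fin d) → ℝ) (F := (Sym2 (Fin d) → ℝ) →L[ℝ] (Sym2 (Fin d) → ℝ) →L[ℝ] ℝ) (σ₁₂ := RingHom.id ℝ)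
set_option maxHeartbeats 2000000 in
set_option synthInstance.maxHeartbeats 1000000 in
open Filter Topology in
lemma main_aux (d : ℕ) (G : (Sym2 (Fin d) → ℝ) → ℝ) (v₀ : Sym2 (Fin d) → ℝ)
    (U : Set (Sym2 (Fin d) → ℝ)) (hUo : IsOpen U) (hv₀U : v₀ ∈ U)
    (hG : ∀ v ∈ U, ContDiffAt ℝ ∞ G v) (c : ℝ) (t1 t2 t3 t4 : Fin d) :
    pd t1 (fun u => G (hmap d v₀ c u)) 0 = 0
    ∧ pd t1 (pd t2 (fun u => G (hmap d v₀ c u))) 0 = 2 * c * pd s(t1, t2) G v₀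
    ∧ pd t1 (pd t2 (pd t3 (fun u => G (hmap d v₀ c u)))) 0 = 0
    ∧ pd t1 (pd t2 (pd t3 (pd t4 (fun u => G (hmap d v₀ c u))))) 0 =
        4 * c ^ 2 * (pd s(t1, t4) (pd s(t2, t3) G) v₀
          + pd s(t1, t3) (pd s(t2, t4) G) v₀
          + pd s(t1, t2) (pd s(t3, t4) G) v₀) := by
  classical
  set h : (Fin d → ℝ) → Sym2 (Fin d) → ℝ := hmap d v₀ c with hh
  set G1 := fderiv ℝ G with hG1
  set G2 := fderiv ℝ G1 with hG2d
  set G3 := fderiv ℝ G2 with hG3d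
  set G4 := fderiv ℝ G3 with hG4d
  have hone : (∞ : WithTop ℕ∞) ≠ 0 := by simp
  have hsucc : (∞ + 1 : WithTop ℕ∞) ≤ ∞ := le_of_eq (by simp)
  have hGm1 : ∀ v ∈ U, ContDiffAt ℝ ∞ G1 v := fun v hv => (hG v hv).fderiv_right hsucc
  have hGm2 : ∀ v ∈ U, ContDiffAt ℝ ∞ G2 v := fun v hv => (hGm1 v hv).fderiv_right hsucc
  have hGm3 : ∀ v ∈ U, ContDiffAt ℝ ∞ G3 v := fun v hv => (hGm2 v hv).fderiv_right hsucc
  have hD0 : ∀ v ∈ U, HasFDerivAt G (G1 v) v :=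
    fun v hv => ((hG v hv).differentiableAt hone).hasFDerivAt
  have hD1 : ∀ v ∈ U, HasFDerivAt G1 (G2 v) v :=
    fun v hv => ((hGm1 v hv).differentiableAt hone).hasFDerivAt
  have hD2 : ∀ v ∈ U, HasFDerivAt G2 (G3 v) v :=
    fun v hv => ((hGm2 v hv).differentiableAt hone).hasFDerivAt
  have hD3 : ∀ v ∈ U, HasFDerivAt G3 (G4 v) v :=
    fun v hv => ((hGm3 v hv).differentiableAt hone).hasFDerivAt
  set N : Set (Fin d → ℝ) := h ⁻¹' U with hN
  have hNo : IsOpen N := hUo.preimage (continuous_hmap v₀ c)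
  have h0 : h 0 = v₀ := hmap_zero v₀ c
  have h0N : (0 : Fin d → ℝ) ∈ N := by
    show h 0 ∈ U
    rw [h0]; exact hv₀U
  have hNn : N ∈ 𝓝 (0 : Fin d → ℝ) := hNo.mem_nhds h0N
  have hmem : ∀ u ∈ N, h u ∈ U := fun u hu => hu
  have hhd : ∀ u, HasFDerivAt h (Lc d c u) u := fun u => hasFDerivAt_hmap v₀ c u
  have hy : ∀ (a : Fin d) (u : Fin d → ℝ),
      HasFDerivAt (fun u' => Lc d c u' (Pi.single a 1)) (Lc d c (Pi.single a 1)) u := by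
    intro a u
    have hfun : (fun u' : Fin d → ℝ => Lc d c u' (Pi.single a 1))
        = fun u' => Lc d c (Pi.single a 1) u' := funext fun u' => Lc_swap c u' (Pi.single a 1)
    rw [hfun]
    exact (Lc d c (Pi.single a 1)).hasFDerivAt
  have hc1 : ∀ u ∈ N, HasFDerivAt (fun u' => G1 (h u')) ((G2 (h u)).comp (Lc d c u)) u :=
    fun u hu => (hD1 _ (hmem u hu)).comp u (hhd u)
  have hc2 : ∀ u ∈ N, HasFDerivAt (fun u' => G2 (h u')) ((G3 (h u)).comp (Lc d c u)) u :=
    fun u hu => (hD2 _ (hmem u hu)).comp u (hhd u)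
  have hc3 : ∀ u ∈ N, HasFDerivAt (fun u' => G3 (h u')) ((G4 (h u)).comp (Lc d c u)) u :=
    fun u hu => (hD3 _ (hmem u hu)).comp u (hhd u)
  -- Level 1
  have eqA : ∀ (t : Fin d) u, u ∈ N → pd t (fun u' => G (h u')) u
      = G1 (h u) (Lc d c u (Pi.single t 1)) := by
    intro t u hu
    refine (pd_of_hasFDerivAt t ((hD0 _ (hmem u hu)).comp u (hhd u))).trans ?_
    simp
  -- Level 2
  have eqB : ∀ (s t : Fin d) u, u ∈ N →
      pd s (fun u' => G1 (h u') (Lc d c u' (Pi.single t 1))) u =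
      G1 (h u) (Lc d c (Pi.single t 1) (Pi.single s 1))
        + G2 (h u) (Lc d c u (Pi.single s 1)) (Lc d c u (Pi.single t 1)) := by
    intro s t u hu
    refine (pd_of_hasFDerivAt s ((hc1 u hu).clm_apply (hy t u))).trans ?_
    simp
  -- Level 3
  have eqC : ∀ (r s t : Fin d) (K : Sym2 (Fin d) → ℝ) u, u ∈ N →
      pd r (fun u' => G1 (h u') K
        + G2 (h u') (Lc d c u' (Pi.single s 1)) (Lc d c u' (Pi.single t 1))) u =
      G2 (h u) (Lc d c u (Pi.single r 1)) K
        + (G3 (h u) (Lc d c u (Pi.single r 1)) (Lc d c u (Pi.single s 1))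
              (Lc d c u (Pi.single t 1))
          + G2 (h u) (Lc d c (Pi.single s 1) (Pi.single r 1)) (Lc d c u (Pi.single t 1)))
        + G2 (h u) (Lc d c u (Pi.single s 1)) (Lc d c (Pi.single t 1) (Pi.single r 1)) := by
    intro r s t K u hu
    have hT1 := (hc1 u hu).clm_apply (hasFDerivAt_const K u)
    have hT2 := ((hc2 u hu).clm_apply (hy s u)).clm_apply (hy t u)
    refine (pd_of_hasFDerivAt r (hT1.add hT2)).trans ?_
    simp
    ring
  -- second derivative of G in coordinates, and its symmetry
  have hpdpd : ∀ a b : Sym2 (Fin d), pd a (pd b G) v₀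
      = G2 v₀ (Pi.single a 1) (Pi.single b 1) := by
    intro a b
    have hbG : pd b G = fun v => G1 v (Pi.single b 1) := by
      funext v; simp only [pd, hG1]
    rw [hbG]
    refine (pd_of_hasFDerivAt a
      ((hD1 v₀ hv₀U).clm_apply (hasFDerivAt_const (Pi.single b 1) v₀))).trans ?_
    simp
  have hsymm : ∀ a b, G2 v₀ a b = G2 v₀ b a := by
    intro a b
    exact second_derivative_symmetric_of_eventually (f := G) (f' := G1)
      (Filter.eventually_of_mem (hUo.mem_nhds hv₀U) (fun v hv => hD0 v hv))
      (hD1 v₀ hv₀U) a b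
  -- eventual identifications of the iterated partial derivatives
  have hs1 : ∀ t : Fin d, pd t (fun u' => G (h u')) =ᶠ[𝓝 (0 : Fin d → ℝ)]
      fun u => G1 (h u) (Lc d c u (Pi.single t 1)) :=
    fun t => Filter.eventuallyEq_of_mem hNn (fun u hu => eqA t u hu)
  have hs2 : ∀ s t : Fin d, pd s (pd t (fun u' => G (h u'))) =ᶠ[𝓝 (0 : Fin d → ℝ)]
      fun u => G1 (h u) (Lc d c (Pi.single t 1) (Pi.single s 1))
        + G2 (h u) (Lc d c u (Pi.single s 1)) (Lc d c u (Pi.single t 1)) :=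
    fun s t => (pd_congr_nhds s (hs1 t)).trans
      (Filter.eventuallyEq_of_mem hNn (fun u hu => eqB s t u hu))
  have hs3 : ∀ r s t : Fin d, pd r (pd s (pd t (fun u' => G (h u'))))
      =ᶠ[𝓝 (0 : Fin d → ℝ)]
      fun u => G2 (h u) (Lc d c u (Pi.single r 1))
          (Lc d c (Pi.single t 1) (Pi.single s 1))
        + (G3 (h u) (Lc d c u (Pi.single r 1)) (Lc d c u (Pi.single s 1))
              (Lc d c u (Pi.single t 1))
          + G2 (h u) (Lc d c (Pi.single s 1) (Pi.single r 1)) (Lc d c u (Pi.single t 1)))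
        + G2 (h u) (Lc d c u (Pi.single s 1)) (Lc d c (Pi.single t 1) (Pi.single r 1)) :=
    fun r s t => (pd_congr_nhds r (hs2 s t)).trans
      (Filter.eventuallyEq_of_mem hNn
        (fun u hu => eqC r s t (Lc d c (Pi.single t 1) (Pi.single s 1)) u hu))
  refine ⟨?_, ?_, ?_, ?_⟩
  · rw [(hs1 t1).eq_of_nhds]
    simp [h0, Lc_zero]
  · rw [(hs2 t1 t2).eq_of_nhds]
    have hsw : s(t2, t1) = s(t1, t2) := Sym2.eq_swap
    have hpd12 : pd s(t1, t2) G v₀ = G1 v₀ (Pi.single s(t1, t2) 1) := by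
      simp only [pd, hG1]
    rw [hpd12]
    simp [h0, Lc_zero, Lc_single, hsw]
  · rw [(hs3 t1 t2 t3).eq_of_nhds]
    simp [h0, Lc_zero]
  · rw [pd_congr_at t1 (hs3 t2 t3 t4)]
    have hT1 := ((hc2 0 h0N).clm_apply (hy t2 0)).clm_apply
      (hasFDerivAt_const (Lc d c (Pi.single t4 1) (Pi.single t3 1)) 0)
    have hT2 := (((hc3 0 h0N).clm_apply (hy t2 0)).clm_apply (hy t3 0)).clm_apply (hy t4 0)
    have hT3 := ((hc2 0 h0N).clm_apply
      (hasFDerivAt_const (Lc d c (Pi.single t3 1) (Pi.single t2 1)) 0)).clm_apply (hy t4 0)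
    have hT4 := ((hc2 0 h0N).clm_apply (hy t3 0)).clm_apply
      (hasFDerivAt_const (Lc d c (Pi.single t4 1) (Pi.single t2 1)) 0)
    refine (pd_of_hasFDerivAt t1 ((hT1.add (hT2.add hT3)).add hT4)).trans ?_
    rw [hpdpd s(t1, t4) s(t2, t3), hpdpd s(t1, t3) s(t2, t4), hpdpd s(t1, t2) s(t3, t4)]
    have hsw21 : s(t2, t1) = s(t1, t2) := Sym2.eq_swap
    have hsw31 : s(t3, t1) = s(t1, t3) := Sym2.eq_swap
    have hsw32 : s(t3, t2) = s(t2, t3) := Sym2.eq_swap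
    have hsw41 : s(t4, t1) = s(t1, t4) := Sym2.eq_swap
    have hsw43 : s(t4, t3) = s(t3, t4) := Sym2.eq_swap
    have hsw42 : s(t4, t2) = s(t2, t4) := Sym2.eq_swap
    simp only [h0, Lc_zero, Lc_single, hsw21, hsw31, hsw32, hsw41, hsw43, hsw42]
    simp [_root_.map_smul, smul_eq_mul]
    simp only [Lc_single, hsw21, hsw31, hsw41]
    simp only [_root_.map_smul, ContinuousLinearMap.smul_apply, smul_eq_mul]
    rw [hsymm (Pi.single s(t2, t3) 1) (Pi.single s(t1, t4) 1)]
    ring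

/-- Lemma D.2, display (C.5): derivatives at `u = 0` of
`φ(u) := f_v(x; μ, v₀ + c̃ · w(u uᵀ))`. -/
theorem normpdfV_deriv_wvec
    (d : ℕ) (hd : 1 ≤ d) (x μ : Fin d → ℝ) (v₀ : Sym2 (Fin d) → ℝ)
    (hv₀ : (Smat d v₀).PosDef) (ctilde : ℝ) (t1 t2 t3 t4 : Fin d) :
    (pd t1 (fun u : Fin d → ℝ =>
        normpdfV d x μ (fun e => v₀ e + ctilde * wvec d (vecMulVec u u) e)) 0 = 0)
    ∧ (pd t1 (pd t2 (fun u : Fin d → ℝ =>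
        normpdfV d x μ (fun e => v₀ e + ctilde * wvec d (vecMulVec u u) e))) 0 =
        2 * ctilde * pd s(t1, t2) (fun v' => normpdfV d x μ v') v₀)
    ∧ (pd t1 (pd t2 (pd t3 (fun u : Fin d → ℝ =>
        normpdfV d x μ (fun e => v₀ e + ctilde * wvec d (vecMulVec u u) e)))) 0 = 0)
    ∧ (pd t1 (pd t2 (pd t3 (pd t4 (fun u : Fin d → ℝ =>
        normpdfV d x μ (fun e => v₀ e + ctilde * wvec d (vecMulVec u u) e))))) 0 =
        4 * ctilde ^ 2 *
          (pd s(t1, t4) (pd s(t2, t3) (fun v' => normpdfV d x μ v')) v₀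
            + pd s(t1, t3) (pd s(t2, t4) (fun v' => normpdfV d x μ v')) v₀
            + pd s(t1, t2) (pd s(t3, t4) (fun v' => normpdfV d x μ v')) v₀)) := by
  have hUo : IsOpen {v : Sym2 (Fin d) → ℝ | (Smat d v).det ≠ 0} :=
    isOpen_ne.preimage contDiff_Smat_det.continuous
  have hv0 : v₀ ∈ {v : Sym2 (Fin d) → ℝ | (Smat d v).det ≠ 0} := hv₀.det_pos.ne'
  obtain ⟨p1, p2, p3, p4⟩ := main_aux d (normpdfV d x μ) v₀
    {v : Sym2 (Fin d) → ℝ | (Smat d v).det ≠ 0} hUo hv0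
    (fun v hv => contDiffAt_normpdfV x μ hv) ctilde t1 t2 t3 t4
  exact ⟨p1, p2, p3, p4⟩

end
end

section
/- Let g(x|z; ψ, α) be the reparameterized two-component heteroscedastic normal mixture density. Then for every α ∈ (0,1), every η = (γ, ν_μ, ν_v) for which S(ν_v) is positive definite, all x ∈ ℝ^d, z ∈ ℝ^p, and every index pair (j,k) with 1 ≤ j ≤ k ≤ d, the first-order partial derivative ∂g/∂λ_{v,jk}, evaluated at λ_μ = 0, λ_v = 0, equals zero. Consequently, for every ℓ ≥ 0, every mixed partial derivative of g of order one in a component of λ_v and order ℓ in components of η vanishes at ψ = ψ* = (η*, 0, 0). -/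
open Real Matrix

noncomputable section

/-- Iterated partial derivative along a list of coordinates. -/
def pdList {ι : Type*} [Fintype ι] [DecidableEq ι] (L : List ι) (F : (ι → ℝ) → ℝ) :
    (ι → ℝ) → ℝ :=
  L.foldr pd F

/-- Normal density with covariate `z` and coefficient matrix `γ` (a `p × d` matrix),
in the `(μ, v)` parameterization: `f_v(x|z; γ, μ, v) := f_v(x; μ + γᵀz, v)`. -/
def normpdfCV (d p : ℕ) (x : Fin d → ℝ) (z : Fin p → ℝ)
    (γ : Matrix (Fin p) (Fin d) ℝ) (μ : Fin d → ℝ) (v : Sym2 (Fin d) → ℝ) : ℝ :=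
  normpdfV d x (fun i => μ i + (γᵀ *ᵥ z) i) v

/-- Reparameterized two-component heteroscedastic normal mixture density, with
`C₁ = −(1+α)/3` and `C₂ = (2−α)/3`. -/
def gmix (d p : ℕ) (x : Fin d → ℝ) (z : Fin p → ℝ) (α : ℝ)
    (γ : Matrix (Fin p) (Fin d) ℝ) (nμ : Fin d → ℝ) (nv : Sym2 (Fin d) → ℝ)
    (lμ : Fin d → ℝ) (lv : Sym2 (Fin d) → ℝ) : ℝ :=
  α * normpdfCV d p x z γ (fun i => nμ i + (1 - α) * lμ i)
      (fun e => nv e + (1 - α) * (2 * lv e + (-(1 + α) / 3) * wvec d (vecMulVec lμ lμ) e))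
  + (1 - α) * normpdfCV d p x z γ (fun i => nμ i - α * lμ i)
      (fun e => nv e - α * (2 * lv e + ((2 - α) / 3) * wvec d (vecMulVec lμ lμ) e))

namespace GmixAux

variable {ι : Type*} [Fintype ι] [DecidableEq ι]

/-- Coordinatewise scaling as a linear map. -/
def sclL (s : ι → ℝ) : (ι → ℝ) →ₗ[ℝ] (ι → ℝ) where
  toFun θ := fun i => s i * θ i
  map_add' θ η := by funext i; simp [mul_add]
  map_smul' c θ := by funext i; simp [smul_eq_mul]; ring

/-- Coordinatewise scaling (by nonzero scalars) as a continuous linear equivalence. -/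
def sclE (s : ι → ℝ) (hs : ∀ i, s i ≠ 0) : (ι → ℝ) ≃L[ℝ] (ι → ℝ) :=
  LinearEquiv.toContinuousLinearEquiv <|
    LinearEquiv.ofLinear (sclL s) (sclL fun i => (s i)⁻¹)
      (by
        apply LinearMap.ext; intro θ; funext i
        simp only [LinearMap.comp_apply, LinearMap.id_apply, sclL, LinearMap.coe_mk,
          AddHom.coe_mk]
        simp [← mul_assoc, mul_inv_cancel₀ (hs i), inv_mul_cancel₀ (hs i)])
      (by
        apply LinearMap.ext; intro θ; funext i
        simp only [LinearMap.comp_apply, LinearMap.id_apply, sclL, LinearMap.coe_mk,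
          AddHom.coe_mk]
        simp [← mul_assoc, mul_inv_cancel₀ (hs i), inv_mul_cancel₀ (hs i)])

lemma sclE_apply (s : ι → ℝ) (hs : ∀ i, s i ≠ 0) (θ : ι → ℝ) :
    sclE s hs θ = fun i => s i * θ i := rfl

lemma pd_comp_sclE (s : ι → ℝ) (hs : ∀ i, s i ≠ 0) (F : (ι → ℝ) → ℝ) (i : ι) (a : ι → ℝ) :
    pd i (fun θ => F (sclE s hs θ)) a = s i * pd i F (sclE s hs a) := by
  have h1 : (fun θ => F (sclE s hs θ)) = F ∘ (sclE s hs) := rfl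
  have h2 : (sclE s hs) (Pi.single i 1) = s i • (Pi.single i 1 : ι → ℝ) := by
    funext j
    rw [sclE_apply]
    by_cases h : j = i
    · subst h; simp
    · simp [Pi.single_apply, h]
  unfold pd
  rw [h1, (sclE s hs).comp_right_fderiv]
  rw [ContinuousLinearMap.comp_apply]
  simp only [ContinuousLinearEquiv.coe_coe, h2]
  rw [(fderiv ℝ F (sclE s hs a)).map_smul]
  simp

lemma pd_const_mul (c : ℝ) (hc : c ≠ 0) (F : (ι → ℝ) → ℝ) (i : ι) :
    pd i (fun θ => c * F θ) = fun a => c * pd i F a := by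
  funext a
  unfold pd
  by_cases h : DifferentiableAt ℝ F a
  · rw [fderiv_const_mul h c]; simp
  · have h2 : ¬ DifferentiableAt ℝ (fun θ => c * F θ) a := by
      intro hcF
      have := hcF.const_mul c⁻¹
      simp only [← mul_assoc, inv_mul_cancel₀ hc, one_mul] at this
      exact h this
    rw [fderiv_zero_of_not_differentiableAt h, fderiv_zero_of_not_differentiableAt h2]
    simp

lemma pdList_cons (i : ι) (L : List ι) (F : (ι → ℝ) → ℝ) :
    pdList (i :: L) F = pd i (pdList L F) := rfl

lemma pdList_comp_sclE (s : ι → ℝ) (hs : ∀ i, s i ≠ 0) (L : List ι) (F : (ι → ℝ) → ℝ)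
    (a : ι → ℝ) :
    pdList L (fun θ => F (sclE s hs θ)) a = (L.map s).prod * pdList L F (sclE s hs a) := by
  induction L generalizing a with
  | nil => simp [pdList]
  | cons i L ih =>
    have hrw : pdList L (fun θ => F (sclE s hs θ))
        = fun b => (L.map s).prod * pdList L F (sclE s hs b) := funext fun b => ih b
    have hc : (L.map s).prod ≠ 0 := by
      apply List.prod_ne_zero
      intro h0
      rcases List.mem_map.1 h0 with ⟨j, _, hj⟩
      exact hs j hj
    rw [pdList_cons, hrw]
    rw [show (fun b => (L.map s).prod * pdList L F ((sclE s hs) b))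
        = fun b => (L.map s).prod * (fun c => pdList L F ((sclE s hs) c)) b from rfl]
    rw [pd_const_mul _ hc]
    beta_reduce
    rw [pd_comp_sclE]
    simp [pdList_cons]
    ring

lemma contDiffOn_pd {U : Set (ι → ℝ)} (hU : IsOpen U) {F : (ι → ℝ) → ℝ}
    (hF : ContDiffOn ℝ (⊤ : ℕ∞) F U) (i : ι) : ContDiffOn ℝ (⊤ : ℕ∞) (pd i F) U := by
  have h1 : ContDiffOn ℝ (⊤ : ℕ∞) (fderiv ℝ F) U := hF.fderiv_of_isOpen hU le_rfl
  exact (ContinuousLinearMap.apply ℝ ℝ (Pi.single i 1 : ι → ℝ)).contDiff.comp_contDiffOn h1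

lemma contDiffOn_pdList {U : Set (ι → ℝ)} (hU : IsOpen U) {F : (ι → ℝ) → ℝ}
    (hF : ContDiffOn ℝ (⊤ : ℕ∞) F U) (L : List ι) :
    ContDiffOn ℝ (⊤ : ℕ∞) (pdList L F) U := by
  induction L with
  | nil => exact hF
  | cons i L ih => exact contDiffOn_pd hU ih i

lemma pd_congr_on {U : Set (ι → ℝ)} (hU : IsOpen U) {F H : (ι → ℝ) → ℝ}
    (h : ∀ θ ∈ U, F θ = H θ) {a : ι → ℝ} (ha : a ∈ U) (i : ι) :
    pd i F a = pd i H a := by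
  unfold pd
  have heq : F =ᶠ[nhds a] H := Filter.eventuallyEq_of_mem (hU.mem_nhds ha) h
  rw [heq.fderiv_eq]

lemma pdList_linear_on {U : Set (ι → ℝ)} (hU : IsOpen U) {F H : (ι → ℝ) → ℝ}
    (hF : ContDiffOn ℝ (⊤ : ℕ∞) F U) (hH : ContDiffOn ℝ (⊤ : ℕ∞) H U)
    (a b : ℝ) (L : List ι) :
    ∀ θ0 ∈ U, pdList L (fun θ => a * F θ + b * H θ) θ0
      = a * pdList L F θ0 + b * pdList L H θ0 := by
  induction L with
  | nil => intro θ0 _; simp [pdList]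
  | cons i L ih =>
    intro θ0 hθ0
    rw [pdList_cons,
      pd_congr_on hU (fun θ hθ => ih θ hθ) hθ0 i]
    have hF' := contDiffOn_pdList hU hF L
    have hH' := contDiffOn_pdList hU hH L
    have h1le : (1 : WithTop ℕ∞) ≤ (⊤ : ℕ∞) := by exact_mod_cast le_top
    have dF : DifferentiableAt ℝ (pdList L F) θ0 :=
      (hF'.contDiffAt (hU.mem_nhds hθ0)).differentiableAt (by simp)
    have dH : DifferentiableAt ℝ (pdList L H) θ0 :=
      (hH'.contDiffAt (hU.mem_nhds hθ0)).differentiableAt (by simp)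
    unfold pd
    rw [fderiv_fun_add (dF.const_mul a) (dH.const_mul b), fderiv_const_mul dF a,
      fderiv_const_mul dH b]
    simp [pdList_cons, pd]

/-- Core cancellation lemma. -/
lemma core (s₁ s₂ : ι → ℝ) (hs₁ : ∀ i, s₁ i ≠ 0) (hs₂ : ∀ i, s₂ i ≠ 0) (a b : ℝ)
    (G : (ι → ℝ) → ℝ) (U : Set (ι → ℝ)) (hU : IsOpen U)
    (hG : ContDiffOn ℝ (⊤ : ℕ∞) G U)
    (θ0 : ι → ℝ) (hθ1 : sclE s₁ hs₁ θ0 = θ0) (hθ2 : sclE s₂ hs₂ θ0 = θ0) (hθU : θ0 ∈ U)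
    (L : List ι) (hzero : a * (L.map s₁).prod + b * (L.map s₂).prod = 0) :
    pdList L (fun θ => a * G (sclE s₁ hs₁ θ) + b * G (sclE s₂ hs₂ θ)) θ0 = 0 := by
  set e₁ := sclE s₁ hs₁
  set e₂ := sclE s₂ hs₂
  set V : Set (ι → ℝ) := e₁ ⁻¹' U ∩ e₂ ⁻¹' U with hV
  have hVopen : IsOpen V :=
    (hU.preimage e₁.continuous).inter (hU.preimage e₂.continuous)
  have hθV : θ0 ∈ V := by
    constructor
    · show e₁ θ0 ∈ U; rw [hθ1]; exact hθU
    · show e₂ θ0 ∈ U; rw [hθ2]; exact hθU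
  have hF₁ : ContDiffOn ℝ (⊤ : ℕ∞) (fun θ => G (e₁ θ)) V := by
    apply hG.comp ((e₁ : (ι → ℝ) →L[ℝ] (ι → ℝ)).contDiff.contDiffOn)
    exact fun θ hθ => hθ.1
  have hF₂ : ContDiffOn ℝ (⊤ : ℕ∞) (fun θ => G (e₂ θ)) V := by
    apply hG.comp ((e₂ : (ι → ℝ) →L[ℝ] (ι → ℝ)).contDiff.contDiffOn)
    exact fun θ hθ => hθ.2
  rw [pdList_linear_on hVopen hF₁ hF₂ a b L θ0 hθV,
    pdList_comp_sclE s₁ hs₁ L G θ0, pdList_comp_sclE s₂ hs₂ L G θ0]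
  show a * ((L.map s₁).prod * pdList L G (e₁ θ0)) + b * ((L.map s₂).prod * pdList L G (e₂ θ0)) = 0
  rw [hθ1, hθ2]
  linear_combination (pdList L G θ0) * hzero

lemma map_prod_pow (t : ℝ) (P : ι → Bool) (L : List ι) :
    (L.map (fun i => if P i then t else (1 : ℝ))).prod = t ^ (L.countP P) := by
  induction L with
  | nil => simp
  | cons i L ih =>
    cases h : P i <;> simp [List.countP_cons, h, ih, pow_succ] <;> ring


section Smooth

variable {ι : Type*} [Fintype ι] [DecidableEq ι]

lemma contDiff_det {d : ℕ} (A : (ι → ℝ) → Matrix (Fin d) (Fin d) ℝ)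
    (hA : ∀ i j, ContDiff ℝ (⊤ : ℕ∞) fun θ => A θ i j) :
    ContDiff ℝ (⊤ : ℕ∞) fun θ => (A θ).det := by
  have hrw : ∀ θ, (A θ).det
      = ∑ σ : Equiv.Perm (Fin d), ((Equiv.Perm.sign σ : ℤ) : ℝ) * ∏ i, A θ (σ i) i := by
    intro θ
    rw [Matrix.det_apply]
    congr 1; funext σ
    simp [Units.smul_def, zsmul_eq_mul]
  simp only [hrw]
  apply ContDiff.sum
  intro σ _
  exact contDiff_const.mul (contDiff_prod fun i _ => hA (σ i) i)

lemma contDiff_adjugate {d : ℕ} (A : (ι → ℝ) → Matrix (Fin d) (Fin d) ℝ)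
    (hA : ∀ i j, ContDiff ℝ (⊤ : ℕ∞) fun θ => A θ i j) (i j : Fin d) :
    ContDiff ℝ (⊤ : ℕ∞) fun θ => (A θ).adjugate i j := by
  simp only [Matrix.adjugate_apply]
  apply contDiff_det (fun θ => (A θ).updateRow j (Pi.single i 1))
  intro k l
  by_cases h : k = j
  · simp only [Matrix.updateRow_apply, h, if_pos rfl]
    exact contDiff_const
  · simp only [Matrix.updateRow_apply, if_neg h]
    exact hA k l

lemma contDiff_det_Smat {d : ℕ}
    (vf : (ι → ℝ) → Sym2 (Fin d) → ℝ)
    (hv : ∀ e, ContDiff ℝ (⊤ : ℕ∞) fun θ => vf θ e) :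
    ContDiff ℝ (⊤ : ℕ∞) fun θ => (Smat d (vf θ)).det := by
  apply contDiff_det
  intro i j
  by_cases h : i = j
  · simp only [Smat, Matrix.of_apply, if_pos h]
    exact hv _
  · simp only [Smat, Matrix.of_apply, if_neg h]
    exact (hv _).div_const 2

lemma contDiffOn_normpdfV_comp (d : ℕ) (x : Fin d → ℝ)
    (μf : (ι → ℝ) → (Fin d → ℝ)) (vf : (ι → ℝ) → Sym2 (Fin d) → ℝ)
    (hμ : ∀ i, ContDiff ℝ (⊤ : ℕ∞) fun θ => μf θ i)
    (hv : ∀ e, ContDiff ℝ (⊤ : ℕ∞) fun θ => vf θ e) :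
    ContDiffOn ℝ (⊤ : ℕ∞) (fun θ => normpdfV d x (μf θ) (vf θ))
      {θ | (Smat d (vf θ)).det ≠ 0} := by
  set A : (ι → ℝ) → Matrix (Fin d) (Fin d) ℝ := fun θ => Smat d (vf θ) with hAdef
  have hA : ∀ i j, ContDiff ℝ (⊤ : ℕ∞) fun θ => A θ i j := by
    intro i j
    by_cases h : i = j
    · simp only [hAdef, Smat, Matrix.of_apply, if_pos h]
      exact hv _
    · simp only [hAdef, Smat, Matrix.of_apply, if_neg h]
      exact (hv _).div_const 2
  have hdet : ContDiff ℝ (⊤ : ℕ∞) fun θ => (A θ).det := contDiff_det A hA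
  set Q : (ι → ℝ) → ℝ :=
    fun θ => (x - μf θ) ⬝ᵥ ((A θ).adjugate *ᵥ (x - μf θ)) with hQdef
  have hQ : ContDiff ℝ (⊤ : ℕ∞) Q := by
    have : Q = fun θ => ∑ i, (x i - μf θ i) *
        ∑ j, (A θ).adjugate i j * (x j - μf θ j) := by
      funext θ
      simp [hQdef, dotProduct, Matrix.mulVec]
    rw [this]
    apply ContDiff.sum
    intro i _
    refine (contDiff_const.sub (hμ i)).mul ?_
    apply ContDiff.sum
    intro j _
    exact (contDiff_adjugate A hA i j).mul (contDiff_const.sub (hμ j))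
  have hrw : ∀ θ, normpdfV d x (μf θ) (vf θ)
      = (2 * π) ^ (-(d : ℝ) / 2) * ((A θ).det) ^ (-(1 : ℝ) / 2) *
        Real.exp (-(((A θ).det)⁻¹ * Q θ) / 2) := by
    intro θ
    unfold normpdfV normpdf
    rw [Matrix.inv_def, Ring.inverse_eq_inv', Matrix.smul_mulVec, dotProduct_smul,
      smul_eq_mul]
  intro θ0 hθ0
  refine ContDiffWithinAt.congr_of_mem ?_ (fun θ _ => hrw θ) hθ0
  apply ContDiffAt.contDiffWithinAt
  have h1 : ContDiffAt ℝ (⊤ : ℕ∞) (fun θ => ((A θ).det) ^ (-(1 : ℝ) / 2)) θ0 :=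
    by
      have := (Real.contDiffAt_rpow_const_of_ne (x := (A θ0).det) (p := -(1 : ℝ) / 2)
        (n := ((⊤ : ℕ∞) : WithTop ℕ∞)) hθ0).comp θ0 hdet.contDiffAt
      exact this
  have h2 : ContDiffAt ℝ (⊤ : ℕ∞) (fun θ => ((A θ).det)⁻¹ * Q θ) θ0 :=
    (hdet.contDiffAt.inv hθ0).mul hQ.contDiffAt
  exact (contDiffAt_const.mul h1).mul
    (Real.contDiff_exp.contDiffAt.comp θ0 (h2.neg.div_const 2))

end Smooth


section Main

lemma wvec_zero (d : ℕ) (e : Sym2 (Fin d)) :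
    wvec d (vecMulVec (0 : Fin d → ℝ) 0) e = 0 := by
  induction e using Sym2.ind with
  | _ i j => simp [wvec, Matrix.vecMulVec_apply]

lemma gmix_lam0 (d p : ℕ) (x : Fin d → ℝ) (z : Fin p → ℝ) (α : ℝ)
    (γ : Matrix (Fin p) (Fin d) ℝ) (nμ : Fin d → ℝ) (nv : Sym2 (Fin d) → ℝ)
    (lv : Sym2 (Fin d) → ℝ) :
    gmix d p x z α γ nμ nv 0 lv
      = α * normpdfV d x (fun i => nμ i + (γᵀ *ᵥ z) i)
          (fun e => nv e + (2 * (1 - α)) * lv e)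
        + (1 - α) * normpdfV d x (fun i => nμ i + (γᵀ *ᵥ z) i)
          (fun e => nv e + (-(2 * α)) * lv e) := by
  unfold gmix normpdfCV
  congr 1
  · congr 1
    congr 1
    · funext i; simp
    · funext e; rw [wvec_zero d e]; ring
  · congr 1
    congr 1
    · funext i; simp
    · funext e; rw [wvec_zero d e]; ring

end Main

end GmixAux

open GmixAux in
/-- Lemma D.2(c): the first-order partial derivatives of `g` with
respect to the components of `λ_v` vanish at `λ_μ = 0, λ_v = 0` (for every admissible
`η`), and consequently every mixed partial derivative of order one in a component of
`λ_v` and any order `ℓ ≥ 0` in components of `η` vanishes at `ψ = ψ* = (η*, 0, 0)`. -/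
theorem gmix_lamV_first_deriv_vanish
    (d p : ℕ) (hd : 1 ≤ d) (α : ℝ) (hα : α ∈ Set.Ioo (0 : ℝ) 1)
    (γstar : Matrix (Fin p) (Fin d) ℝ) (μstar : Fin d → ℝ)
    (vstar : Sym2 (Fin d) → ℝ) (hvstar : (Smat d vstar).PosDef)
    (x : Fin d → ℝ) (z : Fin p → ℝ) :
    (∀ (γ : Matrix (Fin p) (Fin d) ℝ) (nμ : Fin d → ℝ) (nv : Sym2 (Fin d) → ℝ),
        (Smat d nv).PosDef →
        ∀ j k : Fin d, j ≤ k →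
          pd s(j, k) (fun lv => gmix d p x z α γ nμ nv 0 lv) 0 = 0)
    ∧ (∀ L : List (((Fin p × Fin d) ⊕ (Fin d ⊕ Sym2 (Fin d))) ⊕ Sym2 (Fin d)),
        L.countP (fun c => c.isRight) = 1 →
          pdList L
            (fun θ => gmix d p x z α
              (Matrix.of fun a b => θ (Sum.inl (Sum.inl (a, b))))
              (fun i => θ (Sum.inl (Sum.inr (Sum.inl i))))
              (fun e => θ (Sum.inl (Sum.inr (Sum.inr e))))
              0 (fun e => θ (Sum.inr e)))
            (Sum.elim
              (Sum.elim (fun q => γstar q.1 q.2) (Sum.elim μstar vstar))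
              0) = 0) := by
  obtain ⟨hα0, hα1⟩ := hα
  have ht₁ : (2 * (1 - α) : ℝ) ≠ 0 := ne_of_gt (by linarith)
  have ht₂ : (-(2 * α) : ℝ) ≠ 0 := ne_of_lt (by linarith)
  constructor
  · -- Part 1
    intro γ nμ nv hnv j k hjk
    have hs₁ : ∀ i : Sym2 (Fin d), (fun _ : Sym2 (Fin d) => (2 * (1 - α) : ℝ)) i ≠ 0 :=
      fun _ => ht₁
    have hs₂ : ∀ i : Sym2 (Fin d), (fun _ : Sym2 (Fin d) => (-(2 * α) : ℝ)) i ≠ 0 :=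
      fun _ => ht₂
    have hv : ∀ e : Sym2 (Fin d),
        ContDiff ℝ (⊤ : ℕ∞) fun lv : Sym2 (Fin d) → ℝ => nv e + lv e :=
      fun e => contDiff_const.add (contDiff_apply ℝ ℝ e)
    have hG : ContDiffOn ℝ (⊤ : ℕ∞)
        (fun lv : Sym2 (Fin d) → ℝ =>
          normpdfV d x (fun i => nμ i + (γᵀ *ᵥ z) i) (fun e => nv e + lv e))
        {lv : Sym2 (Fin d) → ℝ | (Smat d (fun e => nv e + lv e)).det ≠ 0} :=
      contDiffOn_normpdfV_comp d x (fun _ i => nμ i + (γᵀ *ᵥ z) i) (fun lv e => nv e + lv e)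
        (fun i => contDiff_const) hv
    have hUopen : IsOpen {lv : Sym2 (Fin d) → ℝ | (Smat d (fun e => nv e + lv e)).det ≠ 0} :=
      (isOpen_compl_singleton (x := (0 : ℝ))).preimage (contDiff_det_Smat _ hv).continuous
    have h0U : (0 : Sym2 (Fin d) → ℝ) ∈
        {lv : Sym2 (Fin d) → ℝ | (Smat d (fun e => nv e + lv e)).det ≠ 0} := by
      have hnv' : (fun e => nv e + (0 : Sym2 (Fin d) → ℝ) e) = nv := by funext e; simp
      simp only [Set.mem_setOf_eq, hnv']
      exact hnv.det_pos.ne'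
    have hcore := core (fun _ : Sym2 (Fin d) => (2 * (1 - α) : ℝ))
      (fun _ : Sym2 (Fin d) => (-(2 * α) : ℝ)) hs₁ hs₂ α (1 - α)
      (fun lv : Sym2 (Fin d) → ℝ =>
        normpdfV d x (fun i => nμ i + (γᵀ *ᵥ z) i) (fun e => nv e + lv e))
      _ hUopen hG 0 ((sclE _ hs₁).map_zero) ((sclE _ hs₂).map_zero) h0U [s(j, k)]
      (by simp; ring)
    have hform : (fun lv => gmix d p x z α γ nμ nv 0 lv)
        = fun lv : Sym2 (Fin d) → ℝ =>
            α * (fun lv' : Sym2 (Fin d) → ℝ =>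
              normpdfV d x (fun i => nμ i + (γᵀ *ᵥ z) i) (fun e => nv e + lv' e))
              (sclE _ hs₁ lv)
            + (1 - α) * (fun lv' : Sym2 (Fin d) → ℝ =>
              normpdfV d x (fun i => nμ i + (γᵀ *ᵥ z) i) (fun e => nv e + lv' e))
              (sclE _ hs₂ lv) := by
      funext lv
      rw [gmix_lam0]
      rfl
    exact (congrArg (fun F => pdList [s(j, k)] F (0 : Sym2 (Fin d) → ℝ)) hform).trans hcore
  · -- Part 2
    intro L hL
    have hs₁ : ∀ i : ((Fin p × Fin d) ⊕ (Fin d ⊕ Sym2 (Fin d))) ⊕ Sym2 (Fin d),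
        (fun c : ((Fin p × Fin d) ⊕ (Fin d ⊕ Sym2 (Fin d))) ⊕ Sym2 (Fin d) =>
          if c.isRight then (2 * (1 - α) : ℝ) else 1) i ≠ 0 := by
      intro i; cases i <;> simp [ht₁]
    have hs₂ : ∀ i : ((Fin p × Fin d) ⊕ (Fin d ⊕ Sym2 (Fin d))) ⊕ Sym2 (Fin d),
        (fun c : ((Fin p × Fin d) ⊕ (Fin d ⊕ Sym2 (Fin d))) ⊕ Sym2 (Fin d) =>
          if c.isRight then (-(2 * α) : ℝ) else 1) i ≠ 0 := by
      intro i; cases i <;> simp [ht₂]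
    have hμ : ∀ i : Fin d, ContDiff ℝ (⊤ : ℕ∞)
        fun θ : (((Fin p × Fin d) ⊕ (Fin d ⊕ Sym2 (Fin d))) ⊕ Sym2 (Fin d)) → ℝ =>
          θ (Sum.inl (Sum.inr (Sum.inl i)))
            + ((Matrix.of fun a b => θ (Sum.inl (Sum.inl (a, b))))ᵀ *ᵥ z) i := by
      intro i
      have hrw : (fun θ : (((Fin p × Fin d) ⊕ (Fin d ⊕ Sym2 (Fin d))) ⊕ Sym2 (Fin d)) → ℝ =>
          θ (Sum.inl (Sum.inr (Sum.inl i)))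
            + ((Matrix.of fun a b => θ (Sum.inl (Sum.inl (a, b))))ᵀ *ᵥ z) i)
          = fun θ => θ (Sum.inl (Sum.inr (Sum.inl i)))
              + ∑ q, θ (Sum.inl (Sum.inl (q, i))) * z q := by
        funext θ
        simp [Matrix.mulVec, dotProduct, Matrix.transpose_apply]
      rw [hrw]
      exact (contDiff_apply ℝ ℝ _).add
        (ContDiff.sum fun q _ => (contDiff_apply ℝ ℝ _).mul contDiff_const)
    have hv : ∀ e : Sym2 (Fin d), ContDiff ℝ (⊤ : ℕ∞)
        fun θ : (((Fin p × Fin d) ⊕ (Fin d ⊕ Sym2 (Fin d))) ⊕ Sym2 (Fin d)) → ℝ =>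
          θ (Sum.inl (Sum.inr (Sum.inr e))) + θ (Sum.inr e) :=
      fun e => (contDiff_apply ℝ ℝ _).add (contDiff_apply ℝ ℝ _)
    have hG : ContDiffOn ℝ (⊤ : ℕ∞)
        (fun θ : (((Fin p × Fin d) ⊕ (Fin d ⊕ Sym2 (Fin d))) ⊕ Sym2 (Fin d)) → ℝ =>
          normpdfV d x
            (fun i => θ (Sum.inl (Sum.inr (Sum.inl i)))
              + ((Matrix.of fun a b => θ (Sum.inl (Sum.inl (a, b))))ᵀ *ᵥ z) i)
            (fun e => θ (Sum.inl (Sum.inr (Sum.inr e))) + θ (Sum.inr e)))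
        {θ : (((Fin p × Fin d) ⊕ (Fin d ⊕ Sym2 (Fin d))) ⊕ Sym2 (Fin d)) → ℝ |
          (Smat d (fun e => θ (Sum.inl (Sum.inr (Sum.inr e))) + θ (Sum.inr e))).det ≠ 0} :=
      contDiffOn_normpdfV_comp d x _ _ hμ hv
    have hUopen : IsOpen
        {θ : (((Fin p × Fin d) ⊕ (Fin d ⊕ Sym2 (Fin d))) ⊕ Sym2 (Fin d)) → ℝ |
          (Smat d (fun e => θ (Sum.inl (Sum.inr (Sum.inr e))) + θ (Sum.inr e))).det ≠ 0} :=
      (isOpen_compl_singleton (x := (0 : ℝ))).preimage (contDiff_det_Smat _ hv).continuous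
    set θ0 : (((Fin p × Fin d) ⊕ (Fin d ⊕ Sym2 (Fin d))) ⊕ Sym2 (Fin d)) → ℝ :=
      Sum.elim (Sum.elim (fun q => γstar q.1 q.2) (Sum.elim μstar vstar)) 0 with hθ0def
    have hfix₁ : sclE _ hs₁ θ0 = θ0 := by
      funext i
      rw [sclE_apply]
      cases i <;> simp [hθ0def]
    have hfix₂ : sclE _ hs₂ θ0 = θ0 := by
      funext i
      rw [sclE_apply]
      cases i <;> simp [hθ0def]
    have hθ0U : θ0 ∈
        {θ : (((Fin p × Fin d) ⊕ (Fin d ⊕ Sym2 (Fin d))) ⊕ Sym2 (Fin d)) → ℝ |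
          (Smat d (fun e => θ (Sum.inl (Sum.inr (Sum.inr e))) + θ (Sum.inr e))).det ≠ 0} := by
      have hv0 : (fun e => θ0 (Sum.inl (Sum.inr (Sum.inr e))) + θ0 (Sum.inr e)) = vstar := by
        funext e; simp [hθ0def]
      simp only [Set.mem_setOf_eq, hv0]
      exact hvstar.det_pos.ne'
    have hzero : α * (L.map (fun c : ((Fin p × Fin d) ⊕ (Fin d ⊕ Sym2 (Fin d))) ⊕ Sym2 (Fin d) =>
          if c.isRight then (2 * (1 - α) : ℝ) else 1)).prod
        + (1 - α) * (L.map (fun c : ((Fin p × Fin d) ⊕ (Fin d ⊕ Sym2 (Fin d))) ⊕ Sym2 (Fin d) =>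
          if c.isRight then (-(2 * α) : ℝ) else 1)).prod = 0 := by
      rw [map_prod_pow (2 * (1 - α) : ℝ) (fun c => c.isRight) L,
        map_prod_pow (-(2 * α) : ℝ) (fun c => c.isRight) L, hL, pow_one, pow_one]
      ring
    have hcore := core _ _ hs₁ hs₂ α (1 - α)
      (fun θ : (((Fin p × Fin d) ⊕ (Fin d ⊕ Sym2 (Fin d))) ⊕ Sym2 (Fin d)) → ℝ =>
        normpdfV d x
          (fun i => θ (Sum.inl (Sum.inr (Sum.inl i)))
            + ((Matrix.of fun a b => θ (Sum.inl (Sum.inl (a, b))))ᵀ *ᵥ z) i)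
          (fun e => θ (Sum.inl (Sum.inr (Sum.inr e))) + θ (Sum.inr e)))
      _ hUopen hG θ0 hfix₁ hfix₂ hθ0U L hzero
    have hform : (fun θ : (((Fin p × Fin d) ⊕ (Fin d ⊕ Sym2 (Fin d))) ⊕ Sym2 (Fin d)) → ℝ =>
          gmix d p x z α
            (Matrix.of fun a b => θ (Sum.inl (Sum.inl (a, b))))
            (fun i => θ (Sum.inl (Sum.inr (Sum.inl i))))
            (fun e => θ (Sum.inl (Sum.inr (Sum.inr e))))
            0 (fun e => θ (Sum.inr e)))
        = fun θ =>
            α * (fun θ' : (((Fin p × Fin d) ⊕ (Fin d ⊕ Sym2 (Fin d))) ⊕ Sym2 (Fin d)) → ℝ =>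
              normpdfV d x
                (fun i => θ' (Sum.inl (Sum.inr (Sum.inl i)))
                  + ((Matrix.of fun a b => θ' (Sum.inl (Sum.inl (a, b))))ᵀ *ᵥ z) i)
                (fun e => θ' (Sum.inl (Sum.inr (Sum.inr e))) + θ' (Sum.inr e)))
              (sclE _ hs₁ θ)
            + (1 - α) * (fun θ' : (((Fin p × Fin d) ⊕ (Fin d ⊕ Sym2 (Fin d))) ⊕ Sym2 (Fin d)) → ℝ =>
              normpdfV d x
                (fun i => θ' (Sum.inl (Sum.inr (Sum.inl i)))
                  + ((Matrix.of fun a b => θ' (Sum.inl (Sum.inl (a, b))))ᵀ *ᵥ z) i)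
                (fun e => θ' (Sum.inl (Sum.inr (Sum.inr e))) + θ' (Sum.inr e)))
              (sclE _ hs₂ θ) := by
      funext θ
      rw [gmix_lam0]
      congr 1
      · congr 1
        congr 1
        · funext i
          simp [sclE_apply]
        · funext e
          simp [sclE_apply]
      · congr 1
        congr 1
        · funext i
          simp [sclE_apply]
        · funext e
          simp [sclE_apply]
    exact (congrArg (fun F => pdList L F θ0) hform).trans hcore

end
end

section
/- Let g(x|z; ψ, α) be the reparameterized two-component homoscedastic normal mixture density with true parameter ψ* = (η*, 0), η* = (γ*, μ*, v*). Then for every α ∈ (0,1), all x ∈ ℝ^d, z ∈ ℝ^p, and all i, j, k ∈ {1,…,d}: ∂³g/∂λ_i∂λ_j∂λ_k (x|z; ψ*, α) = α(1−α)(1−2α)·∂³f_v/∂μ_i∂μ_j∂μ_k (x|z; γ*, μ*, v*). -/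
open Real Matrix Filter

noncomputable section

/-- Reparameterized two-component homoscedastic normal mixture density. -/
def gmixH (d p : ℕ) (x : Fin d → ℝ) (z : Fin p → ℝ) (α : ℝ)
    (γ : Matrix (Fin p) (Fin d) ℝ) (nμ : Fin d → ℝ) (nv : Sym2 (Fin d) → ℝ)
    (lam : Fin d → ℝ) : ℝ :=
  α * normpdfCV d p x z γ (fun i => nμ i + (1 - α) * lam i)
      (fun e => nv e - α * (1 - α) * wvec d (vecMulVec lam lam) e)
  + (1 - α) * normpdfCV d p x z γ (fun i => nμ i - α * lam i)
      (fun e => nv e - α * (1 - α) * wvec d (vecMulVec lam lam) e)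

lemma pd_congr {ι : Type*} [Fintype ι] [DecidableEq ι] {f g : (ι → ℝ) → ℝ}
    {a : ι → ℝ} (i : ι) (h : f =ᶠ[nhds a] g) : pd i f a = pd i g a := by
  unfold pd; rw [h.fderiv_eq]

lemma pd_hasFDerivAt {ι : Type*} [Fintype ι] [DecidableEq ι] {f : (ι → ℝ) → ℝ}
    {L : (ι → ℝ) →L[ℝ] ℝ} {a : ι → ℝ} (i : ι) (h : HasFDerivAt f L a) :
    pd i f a = L (Pi.single i 1) := by
  unfold pd; rw [h.fderiv]

lemma pd_contDiffAt {ι : Type*} [Fintype ι] [DecidableEq ι] {f : (ι → ℝ) → ℝ}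
    {x : ι → ℝ} {n : ℕ} (i : ι) (hf : ContDiffAt ℝ (n + 1) f x) :
    ContDiffAt ℝ n (pd i f) x := by
  have h := hf.fderiv_right (m := n) (by norm_cast)
  exact h.clm_apply contDiffAt_const

lemma pd_add_smul {ι : Type*} [Fintype ι] [DecidableEq ι] {f g : (ι → ℝ) → ℝ}
    {x : ι → ℝ} (i : ι) (a b : ℝ) (hf : DifferentiableAt ℝ f x)
    (hg : DifferentiableAt ℝ g x) :
    pd i (fun y => a * f y + b * g y) x = a * pd i f x + b * pd i g x := by
  unfold pd
  rw [fderiv_fun_add ((hf.const_mul a)) ((hg.const_mul b)), fderiv_const_mul hf,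
    fderiv_const_mul hg]
  simp

lemma wvec_mk (d : ℕ) (A : Matrix (Fin d) (Fin d) ℝ) (a b : Fin d) :
    wvec d A s(a, b) = if a = b then A a a else A a b + A b a :=
  Sym2.lift_mk _ _ _

def BlL (d : ℕ) : (Fin d → ℝ) →ₗ[ℝ] (Fin d → ℝ) →ₗ[ℝ] (Sym2 (Fin d) → ℝ) :=
  LinearMap.mk₂ ℝ (fun u v => wvec d (vecMulVec u v))
    (by intro u u' v; funext e
        induction e using Sym2.ind with
        | _ a b => simp [wvec_mk, vecMulVec_apply]; split_ifs <;> [skip; ring] <;> subst_vars <;> ring)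
    (by intro r u v; funext e
        induction e using Sym2.ind with
        | _ a b => simp [wvec_mk, vecMulVec_apply]; split_ifs <;> [skip; ring] <;> subst_vars <;> ring)
    (by intro u v v'; funext e
        induction e using Sym2.ind with
        | _ a b => simp [wvec_mk, vecMulVec_apply]; split_ifs <;> [skip; ring] <;> subst_vars <;> ring)
    (by intro r u v; funext e
        induction e using Sym2.ind with
        | _ a b => simp [wvec_mk, vecMulVec_apply]; split_ifs <;> [skip; ring] <;> subst_vars <;> ring)

def BlC (d : ℕ) : (Fin d → ℝ) →L[ℝ] (Fin d → ℝ) →L[ℝ] (Sym2 (Fin d) → ℝ) :=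
  LinearMap.toContinuousLinearMap
    { toFun := fun u => LinearMap.toContinuousLinearMap (BlL d u)
      map_add' := by intro u u'; ext v e; simp
      map_smul' := by intro r u; ext v e; simp }

lemma BlC_apply (d : ℕ) (u v : Fin d → ℝ) : BlC d u v = wvec d (vecMulVec u v) := rfl

set_option maxHeartbeats 1000000 in
lemma pd3_master {d : ℕ} (F : (Fin d → ℝ) × (Sym2 (Fin d) → ℝ) → ℝ) (a : Fin d → ℝ)
    (b : Sym2 (Fin d) → ℝ) (hF : ContDiffAt ℝ 3 F (a, b)) (s c : ℝ) (i j k : Fin d) :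
    pd i (pd j (pd k (fun lam => F (a + s • lam, b - c • BlC d lam lam)))) 0 =
      s ^ 3 * fderiv ℝ (fderiv ℝ (fderiv ℝ F)) (a, b) (Pi.single i 1, 0) (Pi.single j 1, 0)
          (Pi.single k 1, 0)
      - s * c * (
          fderiv ℝ (fderiv ℝ F) (a, b)
            (0, BlC d (Pi.single i 1) (Pi.single j 1) + BlC d (Pi.single j 1) (Pi.single i 1))
            (Pi.single k 1, 0)
        + fderiv ℝ (fderiv ℝ F) (a, b) (Pi.single j 1, 0)
            (0, BlC d (Pi.single i 1) (Pi.single k 1) + BlC d (Pi.single k 1) (Pi.single i 1))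
        + fderiv ℝ (fderiv ℝ F) (a, b) (Pi.single i 1, 0)
            (0, BlC d (Pi.single j 1) (Pi.single k 1) + BlC d (Pi.single k 1) (Pi.single j 1))) := by
  have h213 : (2 : WithTop ℕ∞) + 1 ≤ 3 := by norm_num
  have h112 : (1 : WithTop ℕ∞) + 1 ≤ 2 := by norm_num
  have h12 : (1 : WithTop ℕ∞) ≤ 2 := by norm_num
  have h13 : (1 : WithTop ℕ∞) ≤ 3 := by norm_num
  set ψ : (Fin d → ℝ) → (Fin d → ℝ) × (Sym2 (Fin d) → ℝ) :=
    fun lam => (a + s • lam, b - c • BlC d lam lam) with hψdef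
  set Dψ : (Fin d → ℝ) → (Fin d → ℝ) →L[ℝ] (Fin d → ℝ) × (Sym2 (Fin d) → ℝ) := fun lam =>
    (s • ContinuousLinearMap.id ℝ (Fin d → ℝ)).prod
      (-(c • ((BlC d lam).comp (ContinuousLinearMap.id ℝ _) + (BlC d).flip lam))) with hDψdef
  have hψ : ∀ lam, HasFDerivAt ψ (Dψ lam) lam := by
    intro lam
    have hq : HasFDerivAt (fun y : Fin d → ℝ => BlC d y y)
        ((BlC d lam).comp (ContinuousLinearMap.id ℝ _) + (BlC d).flip lam) lam :=
      ((BlC d).hasFDerivAt).clm_apply (hasFDerivAt_id lam)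
    have h2 : HasFDerivAt (fun y : Fin d → ℝ => b - c • BlC d y y)
        (-(c • ((BlC d lam).comp (ContinuousLinearMap.id ℝ _) + (BlC d).flip lam))) lam :=
      (hq.const_smul c).const_sub b
    have h1 : HasFDerivAt (fun y : Fin d → ℝ => a + s • y)
        (s • ContinuousLinearMap.id ℝ _) lam :=
      ((hasFDerivAt_id lam).const_smul s).const_add a
    exact h1.prodMk h2
  have hDψ_apply : ∀ lam w, Dψ lam w = (s • w, -(c • (BlC d lam w + BlC d w lam))) := by
    intro lam w
    simp [hDψdef]
  set uv : Fin d → (Fin d → ℝ) → (Fin d → ℝ) × (Sym2 (Fin d) → ℝ) := fun m lam =>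
    (s • (Pi.single m 1 : Fin d → ℝ),
      (-(c • ((BlC d).flip (Pi.single m 1) + BlC d (Pi.single m 1)))) lam) with huvdef
  have huv_eq : ∀ m lam, Dψ lam (Pi.single m 1) = uv m lam := by
    intro m lam
    rw [hDψ_apply]
    simp [huvdef]
  set Luv : Fin d → (Fin d → ℝ) →L[ℝ] (Fin d → ℝ) × (Sym2 (Fin d) → ℝ) := fun m =>
    (0 : (Fin d → ℝ) →L[ℝ] (Fin d → ℝ)).prod
      (-(c • ((BlC d).flip (Pi.single m 1) + BlC d (Pi.single m 1)))) with hLuvdef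
  have huv_deriv : ∀ m lam, HasFDerivAt (uv m) (Luv m) lam := by
    intro m lam
    exact (hasFDerivAt_const _ _).prodMk (ContinuousLinearMap.hasFDerivAt _)
  have hLuv_apply : ∀ m w, Luv m w
      = (0, -(c • (BlC d w (Pi.single m 1) + BlC d (Pi.single m 1) w))) := by
    intro m w
    simp [hLuvdef]
  have huv0 : ∀ m, uv m 0 = (s • (Pi.single m 1 : Fin d → ℝ), (0 : Sym2 (Fin d) → ℝ)) := by
    intro m
    simp [huvdef]
  have hψ0 : ψ 0 = (a, b) := by simp [hψdef]
  have h3ne : (3 : WithTop ℕ∞) ≠ (⊤ : ℕ∞) := by decide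
  have hev : ∀ᶠ q in nhds (a, b), ContDiffAt ℝ 3 F q := hF.eventually h3ne
  have hevψ : ∀ᶠ lam in nhds (0 : Fin d → ℝ), ContDiffAt ℝ 3 F (ψ lam) := by
    have h := (hψ 0).continuousAt.tendsto
    rw [hψ0] at h
    exact h.eventually hev
  have C1 : pd k (fun lam => F (ψ lam)) =ᶠ[nhds (0 : Fin d → ℝ)]
      fun lam => fderiv ℝ F (ψ lam) (uv k lam) := by
    filter_upwards [hevψ] with lam hq
    have hdF : HasFDerivAt (fun l => F (ψ l)) ((fderiv ℝ F (ψ lam)).comp (Dψ lam)) lam :=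
      ((hq.differentiableAt (by decide)).hasFDerivAt).comp lam (hψ lam)
    rw [pd_hasFDerivAt k hdF]
    simp only [ContinuousLinearMap.comp_apply]
    rw [huv_eq]
  have C2 : pd j (pd k (fun lam => F (ψ lam))) =ᶠ[nhds (0 : Fin d → ℝ)]
      fun lam => fderiv ℝ F (ψ lam) (Luv k (Pi.single j 1))
        + fderiv ℝ (fderiv ℝ F) (ψ lam) (uv j lam) (uv k lam) := by
    filter_upwards [C1.eventuallyEq_nhds, hevψ] with lam hloc hq
    rw [pd_congr j hloc]
    have hD1 : HasFDerivAt (fderiv ℝ F) (fderiv ℝ (fderiv ℝ F) (ψ lam)) (ψ lam) :=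
      ((hq.fderiv_right (m := 2) h213).differentiableAt (by decide)).hasFDerivAt
    have hc : HasFDerivAt (fun l => fderiv ℝ F (ψ l))
        ((fderiv ℝ (fderiv ℝ F) (ψ lam)).comp (Dψ lam)) lam := hD1.comp lam (hψ lam)
    have h := hc.clm_apply (huv_deriv k lam)
    rw [pd_hasFDerivAt j h]
    simp only [ContinuousLinearMap.add_apply, ContinuousLinearMap.comp_apply,
      ContinuousLinearMap.flip_apply]
    rw [huv_eq]
  rw [pd_congr i C2]
  have hq0 : ContDiffAt ℝ 3 F (ψ 0) := by rw [hψ0]; exact hF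
  have hD1 : HasFDerivAt (fderiv ℝ F) (fderiv ℝ (fderiv ℝ F) (ψ 0)) (ψ 0) :=
    ((hq0.fderiv_right (m := 2) h213).differentiableAt (by decide)).hasFDerivAt
  have hc : HasFDerivAt (fun l => fderiv ℝ F (ψ l))
      ((fderiv ℝ (fderiv ℝ F) (ψ 0)).comp (Dψ 0)) 0 := hD1.comp 0 (hψ 0)
  have hT2 : HasFDerivAt (fun lam => fderiv ℝ F (ψ lam) (Luv k (Pi.single j 1)))
      ((fderiv ℝ F (ψ 0)).comp 0
        + ((fderiv ℝ (fderiv ℝ F) (ψ 0)).comp (Dψ 0)).flip (Luv k (Pi.single j 1))) 0 :=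
    hc.clm_apply (hasFDerivAt_const _ 0)
  have hD2 : HasFDerivAt (fderiv ℝ (fderiv ℝ F))
      (fderiv ℝ (fderiv ℝ (fderiv ℝ F)) (ψ 0)) (ψ 0) :=
    (((hq0.fderiv_right (m := 2) h213).fderiv_right (m := 1)
      h112).differentiableAt (by decide)).hasFDerivAt
  have hcc : HasFDerivAt (fun l => fderiv ℝ (fderiv ℝ F) (ψ l))
      ((fderiv ℝ (fderiv ℝ (fderiv ℝ F)) (ψ 0)).comp (Dψ 0)) 0 := HasFDerivAt.comp (g := fderiv ℝ (fderiv ℝ F)) 0 hD2 (hψ 0)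
  have hc2 := hcc.clm_apply (huv_deriv j 0)
  have hT1 := hc2.clm_apply (huv_deriv k 0)
  rw [pd_hasFDerivAt i (hT2.fun_add hT1)]
  simp only [ContinuousLinearMap.add_apply, ContinuousLinearMap.comp_apply,
    ContinuousLinearMap.flip_apply, ContinuousLinearMap.zero_apply, map_zero,
    huv_eq, huv0, hLuv_apply, hψ0, zero_add]
  set D3 := fderiv ℝ (fderiv ℝ (fderiv ℝ F)) (a, b) with hD3def
  set D2v := fderiv ℝ (fderiv ℝ F) (a, b) with hD2def
  have hsP : ∀ m : Fin d, ((s • (Pi.single m 1 : Fin d → ℝ), (0 : Sym2 (Fin d) → ℝ)))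
      = s • ((Pi.single m 1 : Fin d → ℝ), (0 : Sym2 (Fin d) → ℝ)) := by
    intro m; rw [Prod.smul_mk, smul_zero]
  have hnP : ∀ w : Sym2 (Fin d) → ℝ, (((0 : Fin d → ℝ)), -(c • w))
      = -(c • (((0 : Fin d → ℝ)), w)) := by
    intro w; rw [Prod.smul_mk, smul_zero, Prod.neg_mk, neg_zero]
  simp only [hsP, hnP, _root_.map_smul, _root_.map_neg, ContinuousLinearMap.smul_apply,
    ContinuousLinearMap.neg_apply, smul_eq_mul]
  ring
set_option maxHeartbeats 1000000 in
lemma pd3_slice {d : ℕ} (F : (Fin d → ℝ) × (Sym2 (Fin d) → ℝ) → ℝ) (a : Fin d → ℝ)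
    (b : Sym2 (Fin d) → ℝ) (hF : ContDiffAt ℝ 3 F (a, b)) (i j k : Fin d) :
    pd i (pd j (pd k (fun μ => F (μ, b)))) a =
      fderiv ℝ (fderiv ℝ (fderiv ℝ F)) (a, b) (Pi.single i 1, 0) (Pi.single j 1, 0)
        (Pi.single k 1, 0) := by
  have h213 : (2 : WithTop ℕ∞) + 1 ≤ 3 := by norm_num
  have h112 : (1 : WithTop ℕ∞) + 1 ≤ 2 := by norm_num
  have h12 : (1 : WithTop ℕ∞) ≤ 2 := by norm_num
  have h13 : (1 : WithTop ℕ∞) ≤ 3 := by norm_num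
  set ι : (Fin d → ℝ) → (Fin d → ℝ) × (Sym2 (Fin d) → ℝ) := fun μ => (μ, b) with hιdef
  set Dι : (Fin d → ℝ) →L[ℝ] (Fin d → ℝ) × (Sym2 (Fin d) → ℝ) :=
    (ContinuousLinearMap.id ℝ (Fin d → ℝ)).prod 0 with hDιdef
  have hι : ∀ μ, HasFDerivAt ι Dι μ := fun μ =>
    (hasFDerivAt_id μ).prodMk (hasFDerivAt_const b μ)
  have hDι_apply : ∀ w : Fin d → ℝ, Dι w = (w, (0 : Sym2 (Fin d) → ℝ)) := by
    intro w; simp [hDιdef]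
  have h3ne : (3 : WithTop ℕ∞) ≠ (⊤ : ℕ∞) := by decide
  have hev : ∀ᶠ q in nhds (a, b), ContDiffAt ℝ 3 F q := hF.eventually h3ne
  have hevι : ∀ᶠ μ in nhds a, ContDiffAt ℝ 3 F (ι μ) := by
    have h := (hι a).continuousAt.tendsto
    exact h.eventually hev
  have C1 : pd k (fun μ => F (ι μ)) =ᶠ[nhds a]
      fun μ => fderiv ℝ F (ι μ) (Pi.single k 1, (0 : Sym2 (Fin d) → ℝ)) := by
    filter_upwards [hevι] with μ hq
    have hdF : HasFDerivAt (fun l => F (ι l)) ((fderiv ℝ F (ι μ)).comp Dι) μ :=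
      ((hq.differentiableAt (by decide)).hasFDerivAt).comp μ (hι μ)
    rw [pd_hasFDerivAt k hdF]
    simp only [ContinuousLinearMap.comp_apply, hDι_apply]
  have C2 : pd j (pd k (fun μ => F (ι μ))) =ᶠ[nhds a]
      fun μ => fderiv ℝ (fderiv ℝ F) (ι μ) (Pi.single j 1, (0 : Sym2 (Fin d) → ℝ))
        (Pi.single k 1, (0 : Sym2 (Fin d) → ℝ)) := by
    filter_upwards [C1.eventuallyEq_nhds, hevι] with μ hloc hq
    rw [pd_congr j hloc]
    have hD1 : HasFDerivAt (fderiv ℝ F) (fderiv ℝ (fderiv ℝ F) (ι μ)) (ι μ) :=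
      ((hq.fderiv_right (m := 2) h213).differentiableAt (by decide)).hasFDerivAt
    have hc : HasFDerivAt (fun l => fderiv ℝ F (ι l))
        ((fderiv ℝ (fderiv ℝ F) (ι μ)).comp Dι) μ := hD1.comp μ (hι μ)
    have h := hc.clm_apply (hasFDerivAt_const
      ((Pi.single k 1 : Fin d → ℝ), (0 : Sym2 (Fin d) → ℝ)) μ)
    rw [pd_hasFDerivAt j h]
    simp only [ContinuousLinearMap.add_apply, ContinuousLinearMap.comp_apply,
      ContinuousLinearMap.flip_apply, ContinuousLinearMap.zero_apply, map_zero,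
      hDι_apply, zero_add]
  rw [pd_congr i C2]
  have hq0 : ContDiffAt ℝ 3 F (ι a) := hF
  have hD2 : HasFDerivAt (fderiv ℝ (fderiv ℝ F))
      (fderiv ℝ (fderiv ℝ (fderiv ℝ F)) (ι a)) (ι a) :=
    (((hq0.fderiv_right (m := 2) h213).fderiv_right (m := 1)
      h112).differentiableAt (by decide)).hasFDerivAt
  have hcc : HasFDerivAt (fun l => fderiv ℝ (fderiv ℝ F) (ι l))
      ((fderiv ℝ (fderiv ℝ (fderiv ℝ F)) (ι a)).comp Dι) a := HasFDerivAt.comp (g := fderiv ℝ (fderiv ℝ F)) a hD2 (hι a)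
  have hc2 := hcc.clm_apply (hasFDerivAt_const
    ((Pi.single j 1 : Fin d → ℝ), (0 : Sym2 (Fin d) → ℝ)) a)
  have hT1 := hc2.clm_apply (hasFDerivAt_const
    ((Pi.single k 1 : Fin d → ℝ), (0 : Sym2 (Fin d) → ℝ)) a)
  rw [pd_hasFDerivAt i hT1]
  simp only [ContinuousLinearMap.add_apply, ContinuousLinearMap.comp_apply,
    ContinuousLinearMap.flip_apply, ContinuousLinearMap.zero_apply, map_zero,
    hDι_apply, zero_add, add_zero]
  rfl

lemma pd3_comb {d : ℕ} {f g : (Fin d → ℝ) → ℝ} (α β : ℝ) (i j k : Fin d)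
    (hf : ∀ᶠ y in nhds (0 : Fin d → ℝ), ContDiffAt ℝ 3 f y)
    (hg : ∀ᶠ y in nhds (0 : Fin d → ℝ), ContDiffAt ℝ 3 g y) :
    pd i (pd j (pd k (fun y => α * f y + β * g y))) 0 =
      α * pd i (pd j (pd k f)) 0 + β * pd i (pd j (pd k g)) 0 := by
  have h13 : (1 : WithTop ℕ∞) ≤ 3 := by norm_num
  have h12 : (1 : WithTop ℕ∞) ≤ 2 := by norm_num
  have hc3 : ∀ {u : (Fin d → ℝ) → ℝ} {y : Fin d → ℝ}, ContDiffAt ℝ 3 u y →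
      ContDiffAt ℝ 2 (pd k u) y := fun hu => pd_contDiffAt (n := 2) k (by exact_mod_cast hu)
  have hc2 : ∀ {u : (Fin d → ℝ) → ℝ} {y : Fin d → ℝ}, ContDiffAt ℝ 2 u y →
      ContDiffAt ℝ 1 (pd j u) y := fun hu => pd_contDiffAt (n := 1) j (by exact_mod_cast hu)
  have h1 : pd k (fun y => α * f y + β * g y) =ᶠ[nhds (0 : Fin d → ℝ)]
      fun y => α * pd k f y + β * pd k g y := by
    filter_upwards [hf, hg] with y hfy hgy
    exact pd_add_smul k α β (hfy.differentiableAt (by decide)) (hgy.differentiableAt (by decide))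
  have h2 : pd j (pd k (fun y => α * f y + β * g y)) =ᶠ[nhds (0 : Fin d → ℝ)]
      fun y => α * pd j (pd k f) y + β * pd j (pd k g) y := by
    filter_upwards [h1.eventuallyEq_nhds, hf, hg] with y hy hfy hgy
    rw [pd_congr j hy]
    exact pd_add_smul j α β ((hc3 hfy).differentiableAt (by decide)) ((hc3 hgy).differentiableAt (by decide))
  rw [pd_congr i h2]
  exact pd_add_smul i α β ((hc2 (hc3 hf.self_of_nhds)).differentiableAt (by decide))
    ((hc2 (hc3 hg.self_of_nhds)).differentiableAt (by decide))

lemma contDiff_matdet {E' : Type*} [NormedAddCommGroup E'] [NormedSpace ℝ E'] {m : ℕ}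
    {M : E' → Matrix (Fin m) (Fin m) ℝ} {n : WithTop ℕ∞}
    (h : ∀ i j, ContDiff ℝ n fun q => M q i j) : ContDiff ℝ n fun q => (M q).det := by
  simp only [Matrix.det_apply']
  exact ContDiff.sum fun σ _ => contDiff_const.mul (contDiff_prod fun i' _ => h _ _)

lemma contDiffAt_normpdfCV (d p : ℕ) (x : Fin d → ℝ) (z : Fin p → ℝ)
    (γ : Matrix (Fin p) (Fin d) ℝ) (a : Fin d → ℝ) (b : Sym2 (Fin d) → ℝ)
    (hb : (Smat d b).det ≠ 0) {n : WithTop ℕ∞} :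
    ContDiffAt ℝ n (fun q : (Fin d → ℝ) × (Sym2 (Fin d) → ℝ) =>
      normpdfCV d p x z γ q.1 q.2) (a, b) := by
  have hproj : ∀ e : Sym2 (Fin d), ContDiff ℝ n
      (fun q : (Fin d → ℝ) × (Sym2 (Fin d) → ℝ) => q.2 e) := fun e =>
    ((ContinuousLinearMap.proj (R := ℝ) (φ := fun _ : Sym2 (Fin d) => ℝ) e).contDiff).comp
      contDiff_snd
  have hentry : ∀ i' j' : Fin d, ContDiff ℝ n
      (fun q : (Fin d → ℝ) × (Sym2 (Fin d) → ℝ) => Smat d q.2 i' j') := by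
    intro i' j'
    by_cases h : i' = j'
    · subst h
      simpa [Smat] using hproj s(i', i')
    · simp only [Smat, Matrix.of_apply, if_neg h]
      exact (hproj s(i', j')).div_const 2
  have hdet : ContDiff ℝ n (fun q : (Fin d → ℝ) × (Sym2 (Fin d) → ℝ) => (Smat d q.2).det) :=
    contDiff_matdet hentry
  have hadj : ∀ i' j' : Fin d, ContDiff ℝ n
      (fun q : (Fin d → ℝ) × (Sym2 (Fin d) → ℝ) => (Smat d q.2).adjugate i' j') := by
    intro i' j'
    simp only [Matrix.adjugate_apply]
    refine contDiff_matdet fun r s' => ?_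
    rcases eq_or_ne r j' with hr | hr
    · simp only [Matrix.updateRow_apply, hr, if_pos rfl]
      exact contDiff_const
    · simp only [Matrix.updateRow_apply, if_neg hr]
      exact hentry r s'
  have hinv : ∀ i' j' : Fin d, ContDiffAt ℝ n
      (fun q : (Fin d → ℝ) × (Sym2 (Fin d) → ℝ) => (Smat d q.2)⁻¹ i' j') (a, b) := by
    intro i' j'
    simp only [Matrix.inv_def, Ring.inverse_eq_inv, Matrix.smul_apply, smul_eq_mul]
    exact (hdet.contDiffAt.inv hb).mul (hadj i' j').contDiffAt
  have hy : ∀ i' : Fin d, ContDiff ℝ n (fun q : (Fin d → ℝ) × (Sym2 (Fin d) → ℝ) =>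
      x i' - (q.1 i' + (γᵀ *ᵥ z) i')) := fun i' =>
    contDiff_const.sub (((((ContinuousLinearMap.proj (R := ℝ)
      (φ := fun _ : Fin d => ℝ) i').contDiff).comp contDiff_fst)).add contDiff_const)
  have hquad : ContDiffAt ℝ n (fun q : (Fin d → ℝ) × (Sym2 (Fin d) → ℝ) =>
      (x - fun i' => q.1 i' + (γᵀ *ᵥ z) i') ⬝ᵥ
        ((Smat d q.2)⁻¹ *ᵥ (x - fun i' => q.1 i' + (γᵀ *ᵥ z) i'))) (a, b) := by
    simp only [dotProduct, mulVec, Pi.sub_apply]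
    exact ContDiffAt.sum fun i' _ => ((hy i').contDiffAt.mul
      (ContDiffAt.sum fun j' _ => (hinv i' j').mul (hy j').contDiffAt))
  simp only [normpdfCV, normpdfV, normpdf]
  refine (contDiffAt_const.mul (hdet.contDiffAt.rpow_const_of_ne hb)).mul ?_
  exact ((hquad.neg).div_const 2).exp


/-- Lemma D.3(b): the third-order `λ` derivative of the
homoscedastic `g` at `ψ* = (η*, 0)` equals `α(1−α)(1−2α)` times the third-order mean
derivative of `f_v`. -/
theorem gmixH_lam_third_deriv
    (d p : ℕ) (hd : 1 ≤ d) (α : ℝ) (hα : α ∈ Set.Ioo (0 : ℝ) 1)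
    (γstar : Matrix (Fin p) (Fin d) ℝ) (μstar : Fin d → ℝ)
    (vstar : Sym2 (Fin d) → ℝ) (hvstar : (Smat d vstar).PosDef)
    (x : Fin d → ℝ) (z : Fin p → ℝ) (i j k : Fin d) :
    pd i (pd j (pd k
        (fun lam => gmixH d p x z α γstar μstar vstar lam))) 0 =
      α * (1 - α) * (1 - 2 * α) *
        pd i (pd j (pd k (fun μ => normpdfCV d p x z γstar μ vstar))) μstar := by
  set F : (Fin d → ℝ) × (Sym2 (Fin d) → ℝ) → ℝ :=
    fun q => normpdfCV d p x z γstar q.1 q.2 with hFdef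
  have hdet : (Smat d vstar).det ≠ 0 := ne_of_gt hvstar.det_pos
  have hF : ContDiffAt ℝ 3 F (μstar, vstar) :=
    contDiffAt_normpdfCV d p x z γstar μstar vstar hdet
  have hfun : (fun lam => gmixH d p x z α γstar μstar vstar lam)
      = fun lam => α * F (μstar + (1 - α) • lam,
            vstar - (α * (1 - α)) • BlC d lam lam)
        + (1 - α) * F (μstar + (-α) • lam,
            vstar - (α * (1 - α)) • BlC d lam lam) := by
    funext lam
    have h1 : (fun i' => μstar i' + (1 - α) * lam i') = μstar + (1 - α) • lam := by
      funext i'; simp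
    have h2 : (fun i' => μstar i' - α * lam i') = μstar + (-α) • lam := by
      funext i'
      simp only [Pi.add_apply, Pi.smul_apply, smul_eq_mul]
      ring
    have h3 : (fun e => vstar e - α * (1 - α) * wvec d (vecMulVec lam lam) e)
        = vstar - (α * (1 - α)) • (BlC d lam lam) := by
      funext e; simp [BlC_apply]
    simp only [gmixH]
    rw [h1, h2, h3]
  rw [hfun]
  have hψcd : ∀ s : ℝ, ContDiff ℝ 3 (fun lam : Fin d → ℝ =>
      (μstar + s • lam, vstar - (α * (1 - α)) • BlC d lam lam)) := by
    intro s
    refine ContDiff.prodMk ?_ ?_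
    · exact contDiff_const.add (contDiff_id.const_smul s)
    · refine contDiff_const.sub (ContDiff.const_smul _ ?_)
      exact ((BlC d).isBoundedBilinearMap.contDiff).comp (contDiff_id.prodMk contDiff_id)
  have h3ne : (3 : WithTop ℕ∞) ≠ (⊤ : ℕ∞) := by decide
  have hcomp : ∀ s : ℝ, ∀ᶠ y in nhds (0 : Fin d → ℝ), ContDiffAt ℝ 3
      (fun lam => F (μstar + s • lam, vstar - (α * (1 - α)) • BlC d lam lam)) y := by
    intro s
    have hev : ∀ᶠ q in nhds (μstar, vstar), ContDiffAt ℝ 3 F q := hF.eventually h3ne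
    have h0 : ((μstar + s • (0 : Fin d → ℝ),
        vstar - (α * (1 - α)) • BlC d (0 : Fin d → ℝ) (0 : Fin d → ℝ)) :
        (Fin d → ℝ) × (Sym2 (Fin d) → ℝ)) = (μstar, vstar) := by
      simp
    have htd := ((hψcd s).contDiffAt (x := (0 : Fin d → ℝ))).continuousAt.tendsto
    rw [h0] at htd
    filter_upwards [htd.eventually hev] with y hy
    exact hy.comp y ((hψcd s).contDiffAt)
  rw [pd3_comb α (1 - α) i j k (hcomp (1 - α)) (hcomp (-α))]
  rw [pd3_master F μstar vstar hF (1 - α) (α * (1 - α)) i j k,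
    pd3_master F μstar vstar hF (-α) (α * (1 - α)) i j k]
  rw [show (fun μ => normpdfCV d p x z γstar μ vstar) = (fun μ => F (μ, vstar)) from rfl,
    pd3_slice F μstar vstar hF i j k]
  ring


end
end
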